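/- arXiv:1712.03173 — 4 statements merged into one kernel-verified Lean document; each statement's English description precedes it below -/
import Mathlib

section
/- Let q be a prime and let a be an element of (ℤ/qℤ)^×. Then |Kl₂(a;q)| ≤ 2 q^{1/4}; equivalently, the unnormalized Kloosterman sum satisfies |∑_{x ∈ (ℤ/qℤ)^×} e((x + a x^{-1})/q)| ≤ 2 q^{3/4}. -/
open Finset Complex

section KloostermanAux

variable {q : ℕ} [NeZero q]

lemma abs_stdAddChar (z : ZMod q) : ‖ZMod.stdAddChar z‖ = 1 := by
  rw [ZMod.stdAddChar_apply]
  exact Circle.norm_coe _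

lemma conj_stdAddChar (z : ZMod q) :
    (starRingEnd ℂ) (ZMod.stdAddChar z) = ZMod.stdAddChar (-z) := by
  have h1 : ZMod.stdAddChar z * ZMod.stdAddChar (-z) = 1 := by
    rw [← AddChar.map_add_eq_mul]; simp
  have h2 : (starRingEnd ℂ) (ZMod.stdAddChar z) = (ZMod.stdAddChar z)⁻¹ := by
    rw [← Complex.inv_eq_conj (abs_stdAddChar z)]
  rw [h2, inv_eq_of_mul_eq_one_right h1]

lemma sum_stdAddChar_mul (u : ZMod q) :
    ∑ m : ZMod q, ZMod.stdAddChar (m * u) = if u = 0 then (q : ℂ) else 0 := by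
  have := AddChar.sum_mulShift (R := ZMod q) (R' := ℂ) u (ZMod.isPrimitive_stdAddChar q)
  rw [this, ZMod.card]
  split_ifs <;> simp

lemma key_field {F : Type*} [Field F] (x1 x2 x3 x4 : F) (h1 : x1 ≠ 0) (h2 : x2 ≠ 0)
    (h3 : x3 ≠ 0) (h4 : x4 ≠ 0)
    (hs : x1 + x2 = x3 + x4) (hi : x1⁻¹ + x2⁻¹ = x3⁻¹ + x4⁻¹) :
    (x3 = x1 ∧ x4 = x2) ∨ (x3 = x2 ∧ x4 = x1) ∨ (x2 = -x1 ∧ x4 = -x3) := by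
  have hi' : (x1 + x2) * (x3 * x4) = (x3 + x4) * (x1 * x2) := by
    field_simp at hi
    linear_combination hi
  by_cases hs0 : x1 + x2 = 0
  · right; right
    exact ⟨by linear_combination hs0, by linear_combination hs0 - hs⟩
  · have hp : x3 * x4 = x1 * x2 := by
      rw [← hs] at hi'
      exact mul_left_cancel₀ hs0 hi'
    have hroot : (x3 - x1) * (x3 - x2) = 0 := by
      linear_combination -x3 * hs - hp
    rcases mul_eq_zero.mp hroot with h | h
    · left
      have e1 : x3 = x1 := by linear_combination h
      exact ⟨e1, by linear_combination -hs - e1⟩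
    · right; left
      have e1 : x3 = x2 := by linear_combination h
      exact ⟨e1, by linear_combination -hs - e1⟩

/-- The unnormalized Kloosterman sum `K(m,n)`. -/
noncomputable def Kfun (q : ℕ) [NeZero q] (m n : ZMod q) : ℂ :=
  ∑ x : (ZMod q)ˣ, ZMod.stdAddChar (m * (x : ZMod q) + n * ((x : ZMod q))⁻¹)

lemma Kfun_shift [Fact q.Prime] (a : ZMod q) (u : (ZMod q)ˣ) :
    Kfun q (u : ZMod q) (a * ((u⁻¹ : (ZMod q)ˣ) : ZMod q)) = Kfun q 1 a := by
  unfold Kfun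
  refine Fintype.sum_equiv (Equiv.mulLeft u) _ _ (fun x => ?_)
  congr 1
  have hu : (u : ZMod q) ≠ 0 := u.ne_zero
  have hx : (x : ZMod q) ≠ 0 := x.ne_zero
  simp only [Equiv.coe_mulLeft, Units.val_mul, ← ZMod.inv_coe_unit]
  field_simp

abbrev Uq (q : ℕ) := (ZMod q)ˣ × (ZMod q)ˣ × (ZMod q)ˣ × (ZMod q)ˣ

def tupC (y : Uq q) : ZMod q :=
  (y.1 : ZMod q) + (y.2.1 : ZMod q) - (y.2.2.1 : ZMod q) - (y.2.2.2 : ZMod q)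

def tupD (y : Uq q) : ZMod q :=
  ((y.1 : ZMod q))⁻¹ + ((y.2.1 : ZMod q))⁻¹ - ((y.2.2.1 : ZMod q))⁻¹ - ((y.2.2.2 : ZMod q))⁻¹

lemma Kfun_pow4 (m n : ZMod q) :
    ((Complex.normSq (Kfun q m n) : ℂ))^2 =
      ∑ y : Uq q, ZMod.stdAddChar (m * tupC y + n * tupD y) := by
  have hc : (starRingEnd ℂ) (Kfun q m n)
      = ∑ x : (ZMod q)ˣ, ZMod.stdAddChar (-(m * (x : ZMod q) + n * ((x : ZMod q))⁻¹)) := by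
    rw [Kfun, map_sum]
    exact Finset.sum_congr rfl fun x _ => conj_stdAddChar _
  calc ((Complex.normSq (Kfun q m n) : ℂ))^2
      = (Kfun q m n * (starRingEnd ℂ) (Kfun q m n))^2 := by rw [Complex.mul_conj]
    _ = (∑ x : (ZMod q)ˣ, ZMod.stdAddChar (-(m * (x : ZMod q) + n * ((x : ZMod q))⁻¹))) *
        ((∑ x : (ZMod q)ˣ, ZMod.stdAddChar (-(m * (x : ZMod q) + n * ((x : ZMod q))⁻¹))) *
        ((∑ x : (ZMod q)ˣ, ZMod.stdAddChar (m * (x : ZMod q) + n * ((x : ZMod q))⁻¹)) *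
        (∑ x : (ZMod q)ˣ, ZMod.stdAddChar (m * (x : ZMod q) + n * ((x : ZMod q))⁻¹)))) := by
        rw [hc, Kfun]; ring
    _ = ∑ y : Uq q, ZMod.stdAddChar (m * tupC y + n * tupD y) := by
        simp only [Finset.sum_mul, Finset.mul_sum, Fintype.sum_prod_type]
        refine Finset.sum_congr rfl fun x1 _ => Finset.sum_congr rfl fun x2 _ =>
          Finset.sum_congr rfl fun x3 _ => Finset.sum_congr rfl fun x4 _ => ?_
        simp only [← AddChar.map_add_eq_mul]
        congr 1
        simp only [tupC, tupD]
        ring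

noncomputable def Tset (q : ℕ) [NeZero q] : Finset (Uq q) :=
  Finset.univ.filter (fun y => tupC y = 0 ∧ tupD y = 0)

lemma moment_eq :
    ∑ m : ZMod q, ∑ n : ZMod q, ((Complex.normSq (Kfun q m n) : ℂ))^2
      = (q : ℂ)^2 * (((Tset q).card : ℕ) : ℂ) := by
  simp_rw [Kfun_pow4]
  have inner : ∀ y : Uq q, (∑ m : ZMod q, ∑ n : ZMod q,
      ZMod.stdAddChar (m * tupC y + n * tupD y))
      = if tupC y = 0 ∧ tupD y = 0 then (q : ℂ)^2 else 0 := by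
    intro y
    have hsplit : ∀ m n : ZMod q, ZMod.stdAddChar (m * tupC y + n * tupD y)
        = ZMod.stdAddChar (m * tupC y) * ZMod.stdAddChar (n * tupD y) :=
      fun m n => AddChar.map_add_eq_mul _ _ _
    simp_rw [hsplit, ← Finset.mul_sum, sum_stdAddChar_mul, ← Finset.sum_mul,
      sum_stdAddChar_mul]
    split_ifs with h1 h2 h3 <;> simp_all <;> ring
  calc ∑ m : ZMod q, ∑ n : ZMod q, ∑ y : Uq q,
        ZMod.stdAddChar (m * tupC y + n * tupD y)
      = ∑ m : ZMod q, ∑ y : Uq q, ∑ n : ZMod q,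
        ZMod.stdAddChar (m * tupC y + n * tupD y) :=
        Finset.sum_congr rfl fun m _ => Finset.sum_comm
    _ = ∑ y : Uq q, ∑ m : ZMod q, ∑ n : ZMod q,
        ZMod.stdAddChar (m * tupC y + n * tupD y) := Finset.sum_comm
    _ = ∑ y : Uq q, (if tupC y = 0 ∧ tupD y = 0 then (q : ℂ)^2 else 0) :=
        Finset.sum_congr rfl fun y _ => inner y
    _ = ∑ y ∈ Tset q, (q : ℂ)^2 := (Finset.sum_filter _ _).symm
    _ = ((Tset q).card : ℕ) • ((q : ℂ)^2) := Finset.sum_const _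
    _ = (q : ℂ)^2 * (((Tset q).card : ℕ) : ℂ) := by
        rw [nsmul_eq_mul]; ring


lemma card_pairs : (Finset.univ : Finset ((ZMod q)ˣ × (ZMod q)ˣ)).card
    = (Fintype.card (ZMod q)ˣ)^2 := by
  rw [Finset.card_univ, Fintype.card_prod]; ring

lemma card_Tset [Fact q.Prime] :
    (Tset q).card ≤ 3 * (Fintype.card (ZMod q)ˣ)^2 := by
  classical
  set T1 : Finset (Uq q) :=
    Finset.univ.filter (fun y => y.2.2.1 = y.1 ∧ y.2.2.2 = y.2.1) with hT1
  set T2 : Finset (Uq q) :=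
    Finset.univ.filter (fun y => y.2.2.1 = y.2.1 ∧ y.2.2.2 = y.1) with hT2
  set T3 : Finset (Uq q) :=
    Finset.univ.filter (fun y => ((y.2.1 : ZMod q) = -(y.1 : ZMod q)) ∧
      ((y.2.2.2 : ZMod q) = -(y.2.2.1 : ZMod q))) with hT3
  have hsub : Tset q ⊆ (T1 ∪ T2) ∪ T3 := by
    intro y hy
    obtain ⟨x1, x2, x3, x4⟩ := y
    unfold Tset at hy; rw [Finset.mem_filter] at hy
    simp only [Finset.mem_univ, true_and, tupC, tupD] at hy
    obtain ⟨hC, hD⟩ := hy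
    have hs : (x1:ZMod q) + x2 = (x3:ZMod q) + x4 := by linear_combination hC
    have hi : ((x1:ZMod q))⁻¹ + ((x2:ZMod q))⁻¹ = ((x3:ZMod q))⁻¹ + ((x4:ZMod q))⁻¹ := by
      linear_combination hD
    simp only [Finset.mem_union, hT1, hT2, hT3, Finset.mem_filter, Finset.mem_univ, true_and]
    rcases key_field _ _ _ _ x1.ne_zero x2.ne_zero x3.ne_zero x4.ne_zero hs hi with
      ⟨h3, h4⟩ | ⟨h3, h4⟩ | ⟨h2', h4⟩
    · exact Or.inl (Or.inl ⟨Units.ext h3, Units.ext h4⟩)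
    · exact Or.inl (Or.inr ⟨Units.ext h3, Units.ext h4⟩)
    · exact Or.inr ⟨h2', h4⟩
  have c1 : T1.card ≤ (Fintype.card (ZMod q)ˣ)^2 := by
    rw [← card_pairs]
    apply Finset.card_le_card_of_injOn (fun y => (y.1, y.2.1)) (fun y _ => Finset.mem_univ _)
    intro y hy y' hy' h
    obtain ⟨a, b, c, d⟩ := y; obtain ⟨a', b', c', d'⟩ := y'
    simp only [hT1, Finset.mem_coe, Finset.mem_filter, Finset.mem_univ, true_and] at hy hy'
    simp only [Prod.mk.injEq] at h ⊢
    obtain ⟨rfl, rfl⟩ := h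
    exact ⟨rfl, rfl, hy.1.trans hy'.1.symm, by rw [hy.2, hy'.2]⟩
  have c2 : T2.card ≤ (Fintype.card (ZMod q)ˣ)^2 := by
    rw [← card_pairs]
    apply Finset.card_le_card_of_injOn (fun y => (y.1, y.2.1)) (fun y _ => Finset.mem_univ _)
    intro y hy y' hy' h
    obtain ⟨a, b, c, d⟩ := y; obtain ⟨a', b', c', d'⟩ := y'
    simp only [hT2, Finset.mem_coe, Finset.mem_filter, Finset.mem_univ, true_and] at hy hy'
    simp only [Prod.mk.injEq] at h ⊢
    obtain ⟨rfl, rfl⟩ := h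
    exact ⟨rfl, rfl, hy.1.trans hy'.1.symm, by rw [hy.2, hy'.2]⟩
  have c3 : T3.card ≤ (Fintype.card (ZMod q)ˣ)^2 := by
    rw [← card_pairs]
    apply Finset.card_le_card_of_injOn (fun y => (y.1, y.2.2.1)) (fun y _ => Finset.mem_univ _)
    intro y hy y' hy' h
    obtain ⟨a, b, c, d⟩ := y; obtain ⟨a', b', c', d'⟩ := y'
    simp only [hT3, Finset.mem_coe, Finset.mem_filter, Finset.mem_univ, true_and] at hy hy'
    simp only [Prod.mk.injEq] at h ⊢
    obtain ⟨rfl, rfl⟩ := h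
    refine ⟨rfl, Units.ext (hy.1.trans hy'.1.symm), rfl, Units.ext (by rw [hy.2, hy'.2])⟩
  calc (Tset q).card ≤ ((T1 ∪ T2) ∪ T3).card := Finset.card_le_card hsub
    _ ≤ (T1 ∪ T2).card + T3.card := Finset.card_union_le _ _
    _ ≤ (T1.card + T2.card) + T3.card := by
        exact Nat.add_le_add_right (Finset.card_union_le _ _) _
    _ ≤ 3 * (Fintype.card (ZMod q)ˣ)^2 := by omega

end KloostermanAux

/-- The normalized Kloosterman sum `Kl₂(a; c) = c^{-1/2} ∑_{x ∈ (ℤ/cℤ)ˣ} e((x + a x⁻¹)/c)`,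
where `e(t) = exp(2πit)` and an element of `ℤ/cℤ` is identified with its representative
in `{0, …, c-1}` via `ZMod.val`. -/
noncomputable def Kl2 (c : ℕ) (a : ZMod c) : ℂ :=
  (Real.sqrt c : ℂ)⁻¹ * ∑ x ∈ Finset.range c,
    if Nat.Coprime x c then
      Complex.exp (2 * (Real.pi : ℂ) * Complex.I *
        ((((x : ZMod c) + a * (x : ZMod c)⁻¹).val : ℂ) / (c : ℂ)))
    else 0

lemma Kl2_eq_Kfun (q : ℕ) [NeZero q] (a : ZMod q) :
    Kl2 q a = (Real.sqrt q : ℂ)⁻¹ * Kfun q 1 a := by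
  unfold Kl2 Kfun
  congr 1
  rw [← Finset.sum_filter]
  refine Finset.sum_bij
    (fun x hx => ZMod.unitOfCoprime x (Finset.mem_filter.mp hx).2)
    (fun x hx => Finset.mem_univ _) ?_ ?_ ?_
  · intro x hx x' hx' h
    have hx1 := Finset.mem_range.mp (Finset.mem_filter.mp hx).1
    have hx2 := Finset.mem_range.mp (Finset.mem_filter.mp hx').1
    have hcast : ((x : ℕ) : ZMod q) = ((x' : ℕ) : ZMod q) := by
      have := congrArg (Units.val) h
      simpa [ZMod.coe_unitOfCoprime] using this
    calc x = ((x : ℕ) : ZMod q).val := (ZMod.val_cast_of_lt hx1).symm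
      _ = ((x' : ℕ) : ZMod q).val := by rw [hcast]
      _ = x' := ZMod.val_cast_of_lt hx2
  · intro u _
    refine ⟨(u : ZMod q).val, Finset.mem_filter.mpr
      ⟨Finset.mem_range.mpr (ZMod.val_lt _), ZMod.val_coe_unit_coprime u⟩, ?_⟩
    refine (Units.ext ?_).symm
    simp [ZMod.coe_unitOfCoprime, ZMod.natCast_val, ZMod.cast_id]
  · intro x hx
    rw [ZMod.stdAddChar_apply, ZMod.toCircle_apply, ZMod.coe_unitOfCoprime, one_mul,
      mul_div_assoc]

/-- Kloosterman's bound: for a prime `q` and `a ∈ (ℤ/qℤ)ˣ`, `|Kl₂(a;q)| ≤ 2 q^{1/4}`. -/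
theorem stmt_2 (q : ℕ) (hq : q.Prime) (a : (ZMod q)ˣ) :
    ‖Kl2 q (a : ZMod q)‖ ≤ 2 * (q : ℝ) ^ ((1 : ℝ) / 4) := by
  haveI : Fact q.Prime := ⟨hq⟩
  haveI : NeZero q := ⟨hq.ne_zero⟩
  have hq2 : 2 ≤ q := hq.two_le
  have hq0 : (0:ℝ) < (q:ℝ) := by exact_mod_cast hq.pos
  -- real version of the moment identity
  have momentR : ∑ m : ZMod q, ∑ n : ZMod q, (Complex.normSq (Kfun q m n))^2
      = (q : ℝ)^2 * ((Tset q).card : ℝ) := by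
    exact_mod_cast moment_eq (q := q)
  -- lower bound for the double sum
  set NS : ℝ := Complex.normSq (Kfun q 1 (a : ZMod q)) with hNS
  have lower : (Fintype.card (ZMod q)ˣ : ℝ) * NS^2
      ≤ ∑ m : ZMod q, ∑ n : ZMod q, (Complex.normSq (Kfun q m n))^2 := by
    rw [← Finset.sum_product']
    have himg : ∑ p ∈ Finset.image (fun u : (ZMod q)ˣ => ((u : ZMod q),
          ((a : ZMod q) * ((u⁻¹ : (ZMod q)ˣ) : ZMod q)))) Finset.univ,
          (Complex.normSq (Kfun q p.1 p.2))^2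
        = ∑ u : (ZMod q)ˣ, (Complex.normSq (Kfun q (u : ZMod q)
            ((a : ZMod q) * ((u⁻¹ : (ZMod q)ˣ) : ZMod q))))^2 := by
      apply Finset.sum_image
      intro u _ u' _ h
      exact Units.ext (congrArg Prod.fst h)
    calc (Fintype.card (ZMod q)ˣ : ℝ) * NS^2
        = ∑ u : (ZMod q)ˣ, (Complex.normSq (Kfun q (u : ZMod q)
            ((a : ZMod q) * ((u⁻¹ : (ZMod q)ˣ) : ZMod q))))^2 := by
          rw [Finset.sum_congr rfl (fun u _ => by rw [Kfun_shift])]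
          rw [Finset.sum_const, Finset.card_univ, nsmul_eq_mul]
      _ = ∑ p ∈ Finset.image (fun u : (ZMod q)ˣ => ((u : ZMod q),
            ((a : ZMod q) * ((u⁻¹ : (ZMod q)ˣ) : ZMod q)))) Finset.univ,
            (Complex.normSq (Kfun q p.1 p.2))^2 := himg.symm
      _ ≤ ∑ p ∈ (Finset.univ : Finset (ZMod q)) ×ˢ (Finset.univ : Finset (ZMod q)),
            (Complex.normSq (Kfun q p.1 p.2))^2 := by
          refine Finset.sum_le_sum_of_subset_of_nonneg (fun p _ => Finset.mem_product.mpr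
            ⟨Finset.mem_univ _, Finset.mem_univ _⟩) (fun p _ _ => by positivity)
  have cardU : Fintype.card (ZMod q)ˣ = q - 1 := by
    rw [ZMod.card_units_eq_totient, Nat.totient_prime hq]
  have cardU_pos : (0:ℝ) < (Fintype.card (ZMod q)ˣ : ℝ) := by
    rw [cardU]; exact_mod_cast Nat.sub_pos_of_lt hq.one_lt
  have upper : ((Tset q).card : ℝ) ≤ 3 * ((Fintype.card (ZMod q)ˣ : ℝ))^2 := by
    exact_mod_cast card_Tset (q := q)
  have cardle : (Fintype.card (ZMod q)ˣ : ℝ) ≤ (q : ℝ) := by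
    rw [cardU]; exact_mod_cast Nat.sub_le q 1
  -- NS^2 ≤ 3 q^3
  have hNS2 : NS^2 ≤ 3 * (q:ℝ)^3 := by
    have h1 : (Fintype.card (ZMod q)ˣ : ℝ) * NS^2
        ≤ (q:ℝ)^2 * (3 * ((Fintype.card (ZMod q)ˣ : ℝ))^2) := by
      calc (Fintype.card (ZMod q)ˣ : ℝ) * NS^2 ≤ _ := lower
        _ = (q : ℝ)^2 * ((Tset q).card : ℝ) := momentR
        _ ≤ (q:ℝ)^2 * (3 * ((Fintype.card (ZMod q)ˣ : ℝ))^2) := by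
            apply mul_le_mul_of_nonneg_left upper (by positivity)
    have h2 : NS^2 ≤ (q:ℝ)^2 * (3 * (Fintype.card (ZMod q)ˣ : ℝ)) := by
      rw [← mul_le_mul_iff_right₀ cardU_pos]
      calc (Fintype.card (ZMod q)ˣ : ℝ) * NS^2 ≤ _ := h1
        _ = (Fintype.card (ZMod q)ˣ : ℝ) * ((q:ℝ)^2 * (3 * (Fintype.card (ZMod q)ˣ : ℝ))) := by
            ring
    calc NS^2 ≤ (q:ℝ)^2 * (3 * (Fintype.card (ZMod q)ˣ : ℝ)) := h2
      _ ≤ (q:ℝ)^2 * (3 * (q:ℝ)) := by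
          apply mul_le_mul_of_nonneg_left (by linarith) (by positivity)
      _ = 3 * (q:ℝ)^3 := by ring
  -- X := abs of the Kloosterman sum
  set X : ℝ := ‖Kfun q 1 (a : ZMod q)‖ with hX
  have hX4 : X^4 ≤ 3 * (q:ℝ)^3 := by
    have : X^4 = NS^2 := by
      rw [hX, hNS, ← Complex.sq_norm]; ring
    rw [this]; exact hNS2
  have hrpow : ((2:ℝ) * (q:ℝ)^((3:ℝ)/4))^4 = 16 * (q:ℝ)^3 := by
    rw [mul_pow, ← Real.rpow_natCast ((q:ℝ)^((3:ℝ)/4)) 4, ← Real.rpow_mul (le_of_lt hq0)]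
    norm_num
  have hXle : X ≤ 2 * (q:ℝ)^((3:ℝ)/4) := by
    apply le_of_pow_le_pow_left₀ (n := 4) (by norm_num) (by positivity)
    calc X^4 ≤ 3 * (q:ℝ)^3 := hX4
      _ ≤ 16 * (q:ℝ)^3 := by nlinarith [pow_pos hq0 3]
      _ = ((2:ℝ) * (q:ℝ)^((3:ℝ)/4))^4 := hrpow.symm
  -- conclude
  rw [Kl2_eq_Kfun, norm_mul, norm_inv, Complex.norm_real, Real.norm_eq_abs,
    _root_.abs_of_nonneg (Real.sqrt_nonneg _)]
  have hsqrt : Real.sqrt (q:ℝ) = (q:ℝ)^((1:ℝ)/2) := by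
    rw [Real.sqrt_eq_rpow]
  have hsqrt_pos : 0 < Real.sqrt (q:ℝ) := Real.sqrt_pos.mpr hq0
  calc (Real.sqrt (q:ℝ))⁻¹ * X ≤ (Real.sqrt (q:ℝ))⁻¹ * (2 * (q:ℝ)^((3:ℝ)/4)) := by
        apply mul_le_mul_of_nonneg_left hXle (by positivity)
    _ = 2 * (q : ℝ) ^ ((1 : ℝ) / 4) := by
        rw [hsqrt, ← Real.rpow_neg (le_of_lt hq0)]
        rw [mul_comm ((q:ℝ)^(-((1:ℝ)/2))), mul_assoc, ← Real.rpow_add hq0]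
        norm_num
end

section
/- There is an absolute constant C such that for every prime q, every nontrivial Dirichlet character χ modulo q, every integer M, and every integer N with 1 ≤ N ≤ q, one has |∑_{M < n ≤ M+N} χ(n)| ≤ C q^{1/2} log q. -/
open Complex Finset

private lemma pv_exp_sub_one_eq (x : ℂ) : Complex.exp (2*x*Complex.I) - 1
    = 2 * Complex.sin x * (Complex.I * Complex.exp (x*Complex.I)) := by
  have he : Complex.exp (x*Complex.I) ≠ 0 := Complex.exp_ne_zero _
  rw [Complex.sin, show -x*Complex.I = -(x*Complex.I) by ring, Complex.exp_neg,
    show 2*x*Complex.I = x*Complex.I + x*Complex.I by ring, Complex.exp_add]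
  field_simp
  ring_nf
  rw [Complex.I_sq]
  ring

private lemma pv_abs_exp_sub_one (θ : ℝ) :
    ‖Complex.exp ((2*θ : ℝ)*Complex.I) - 1‖ = 2 * |Real.sin θ| := by
  have := pv_exp_sub_one_eq (θ : ℂ)
  rw [show ((2*θ : ℝ) : ℂ)*Complex.I = 2*(θ:ℂ)*Complex.I by push_cast; ring]
  rw [this, norm_mul, norm_mul, norm_mul, Complex.norm_I, Complex.norm_exp_ofReal_mul_I,
    ← Complex.ofReal_sin, Complex.norm_real, Real.norm_eq_abs, Complex.norm_two]
  ring

private lemma pv_geom_abs_le {z : ℂ} (hz : ‖z‖ = 1) (h1 : z ≠ 1) (N : ℕ) :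
    ‖∑ j ∈ range N, z ^ j‖ ≤ 2 / ‖z - 1‖ := by
  rw [geom_sum_eq h1, norm_div]
  gcongr
  calc ‖z ^ N - 1‖ ≤ ‖z ^ N‖ + 1 := by
        simpa using norm_sub_le (z ^ N) 1
    _ = 2 := by rw [norm_pow, hz]; norm_num

private lemma pv_sin_lb {x : ℝ} (h0 : 0 ≤ x) (h1 : x ≤ 1) :
    2 * min x (1-x) ≤ Real.sin (Real.pi * x) := by
  rcases le_total x (1/2) with h | h
  · calc 2 * min x (1-x) ≤ 2 * x := by
          have : min x (1-x) ≤ x := min_le_left _ _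
          nlinarith
      _ = 2 / Real.pi * (Real.pi * x) := by field_simp
      _ ≤ Real.sin (Real.pi * x) := Real.mul_le_sin (by positivity) (by nlinarith [Real.pi_pos])
  · have heq : Real.sin (Real.pi * x) = Real.sin (Real.pi * (1 - x)) := by
      rw [show Real.pi * (1-x) = Real.pi - Real.pi * x by ring, Real.sin_pi_sub]
    rw [heq]
    calc 2 * min x (1-x) ≤ 2 * (1-x) := by
          have : min x (1-x) ≤ 1-x := min_le_right _ _
          nlinarith
      _ = 2 / Real.pi * (Real.pi * (1-x)) := by field_simp
      _ ≤ _ := Real.mul_le_sin (by nlinarith [Real.pi_pos]) (by nlinarith [Real.pi_pos])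

private lemma pv_conj_stdAddChar {q : ℕ} [NeZero q] (a : ZMod q) :
    (starRingEnd ℂ) (ZMod.stdAddChar a) = ZMod.stdAddChar (-a) := by
  have h : a = ((a.val : ℤ) : ZMod q) := by simp
  rw [h, ← Int.cast_neg, ZMod.stdAddChar_coe, ZMod.stdAddChar_coe, ← Complex.exp_conj]
  congr 1
  rw [map_div₀, map_mul, map_mul, map_mul, Complex.conj_I, map_intCast, map_natCast,
    Complex.conj_ofReal, map_ofNat]
  push_cast
  ring

private lemma pv_abs_gauss {q : ℕ} [NeZero q] (hq : q.Prime)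
    (χ : DirichletCharacter ℂ q) (hχ : χ ≠ 1) :
    ‖gaussSum χ (ZMod.stdAddChar)‖ = Real.sqrt q := by
  have : Fact q.Prime := ⟨hq⟩
  have hψ : (ZMod.stdAddChar (N := q)).IsPrimitive := ZMod.isPrimitive_stdAddChar q
  have key : gaussSum χ ZMod.stdAddChar * gaussSum χ⁻¹ (ZMod.stdAddChar)⁻¹ = q := by
    rw [gaussSum_mul_gaussSum_eq_card hχ hψ, ZMod.card]
  have hconj : gaussSum χ⁻¹ (ZMod.stdAddChar)⁻¹
      = (starRingEnd ℂ) (gaussSum χ ZMod.stdAddChar) := by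
    rw [gaussSum, gaussSum, map_sum]
    refine Finset.sum_congr rfl fun a _ => ?_
    rw [map_mul, pv_conj_stdAddChar, AddChar.inv_apply, ← MulChar.star_apply' χ a]
    rfl
  rw [hconj, Complex.mul_conj] at key
  have h2 : (Complex.normSq (gaussSum χ ZMod.stdAddChar) : ℝ) = q := by
    exact_mod_cast congrArg Complex.re key
  rw [Complex.norm_def, h2]

private lemma pv_isPrimitive {q : ℕ} (hq : q.Prime) (χ : DirichletCharacter ℂ q)
    (hχ : χ ≠ 1) : χ.IsPrimitive := by
  rcases (Nat.Prime.eq_one_or_self_of_dvd hq _ χ.conductor_dvd_level) with h | h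
  · exact absurd (haveI : NeZero q := ⟨hq.ne_zero⟩; DirichletCharacter.eq_one_iff_conductor_eq_one.mpr h) hχ
  · exact h

private lemma pv_sum_Ioc_int (M : ℤ) (N : ℕ) (f : ℤ → ℂ) :
    ∑ n ∈ Finset.Ioc M (M + (N:ℤ)), f n = ∑ j ∈ Finset.range N, f (M + 1 + j) := by
  refine Finset.sum_nbij' (fun n => (n - (M+1)).toNat) (fun j => M + 1 + j) ?_ ?_ ?_ ?_ ?_
  · intro a ha; simp only [Finset.mem_Ioc] at ha; simp only [Finset.mem_range]; omega
  · intro a ha; simp only [Finset.mem_range] at ha; simp only [Finset.mem_Ioc]; omega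
  · intro a ha; simp only [Finset.mem_Ioc] at ha; omega
  · intro a ha; simp only [Finset.mem_range] at ha; omega
  · intro a ha; simp only [Finset.mem_Ioc] at ha
    congr 1; omega

-- the inner (geometric) sum bound
private lemma pv_inner {q : ℕ} [Fact q.Prime] (M : ℤ) (N : ℕ) (a : ZMod q) (ha : a ≠ 0) :
    ‖∑ n ∈ Finset.Ioc M (M + (N:ℤ)), ZMod.stdAddChar ((n : ZMod q) * a)‖
      ≤ (q:ℝ)/(2*a.val) + (q:ℝ)/(2*((q:ℝ) - a.val)) := by
  have hq1 : 1 < q := (Fact.out : q.Prime).one_lt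
  set ψ : AddChar (ZMod q) ℂ := ZMod.stdAddChar with hψdef
  set z : ℂ := ψ a with hzdef
  set v : ℕ := a.val with hvdef
  have hv1 : 1 ≤ v := by
    rcases Nat.eq_zero_or_pos v with h | h
    · exact absurd ((ZMod.val_eq_zero a).mp h) ha
    · exact h
  have hvq : v < q := ZMod.val_lt a
  have hxpos : (0:ℝ) < (v:ℝ)/(q:ℝ) := by
    have : (0:ℝ) < (q:ℝ) := by positivity
    positivity
  have hqR : (0:ℝ) < (q:ℝ) := by exact_mod_cast Nat.zero_lt_of_lt hq1
  have hx1 : (v:ℝ)/(q:ℝ) < 1 := by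
    rw [div_lt_one hqR]; exact_mod_cast hvq
  -- z as an exponential
  have hzexp : z = Complex.exp ((2*(Real.pi * v / q) : ℝ) * Complex.I) := by
    have h : a = ((v : ℤ) : ZMod q) := by simp [hvdef]
    rw [hzdef, hψdef, h, ZMod.stdAddChar_coe]
    congr 1
    push_cast
    ring
  have habsz : ‖z‖ = 1 := by
    rw [hzexp, Complex.norm_exp_ofReal_mul_I]
  -- sin bound
  have hsin : (0:ℝ) < Real.sin (Real.pi * ((v:ℝ)/(q:ℝ)))
      ∧ 2 * min ((v:ℝ)/q) (1 - (v:ℝ)/q) ≤ Real.sin (Real.pi * ((v:ℝ)/(q:ℝ))) := by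
    have hlb := pv_sin_lb (le_of_lt hxpos) (le_of_lt hx1)
    constructor
    · calc (0:ℝ) < 2 * min ((v:ℝ)/q) (1 - (v:ℝ)/q) := by
            have h1 : (0:ℝ) < 1 - (v:ℝ)/q := by linarith
            have := lt_min hxpos h1
            positivity
        _ ≤ _ := hlb
    · exact hlb
  have hzne1 : z ≠ 1 := by
    intro h
    apply ha
    apply ZMod.injective_toCircle
    apply Subtype.coe_injective
    rw [AddChar.map_zero_eq_one]
    show ((ZMod.toCircle a : Circle) : ℂ) = ((1 : Circle) : ℂ)
    rw [Circle.coe_one]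
    exact h
  have habsz1 : ‖z - 1‖ = 2 * Real.sin (Real.pi * ((v:ℝ)/(q:ℝ))) := by
    rw [hzexp, pv_abs_exp_sub_one, abs_of_pos]
    · congr 2
      ring
    · have := hsin.1
      rw [show Real.pi * v / q = Real.pi * ((v:ℝ)/q) by ring]
      exact this
  -- rewrite sum as geometric
  have hgeo : ∑ n ∈ Finset.Ioc M (M + (N:ℤ)), ψ ((n : ZMod q) * a)
      = ψ (((M+1 : ℤ) : ZMod q) * a) * ∑ j ∈ Finset.range N, z ^ j := by
    rw [pv_sum_Ioc_int M N (fun n => ψ ((n : ZMod q) * a)), Finset.mul_sum]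
    refine Finset.sum_congr rfl fun j _ => ?_
    have hc : ((M + 1 + (j:ℤ) : ℤ) : ZMod q) * a
        = ((M+1 : ℤ) : ZMod q) * a + j • a := by
      push_cast
      rw [nsmul_eq_mul]
      ring
    rw [hc, AddChar.map_add_eq_mul, AddChar.map_nsmul_eq_pow]
  have habsψ : ‖ψ (((M+1 : ℤ) : ZMod q) * a)‖ = 1 := by
    rw [hψdef, ZMod.stdAddChar_apply]
    exact Circle.norm_coe _
  calc ‖∑ n ∈ Finset.Ioc M (M + (N:ℤ)), ψ ((n : ZMod q) * a)‖
      = ‖∑ j ∈ Finset.range N, z ^ j‖ := by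
        rw [hgeo, norm_mul, habsψ, one_mul]
    _ ≤ 2 / ‖z - 1‖ := pv_geom_abs_le habsz hzne1 N
    _ = 1 / Real.sin (Real.pi * ((v:ℝ)/(q:ℝ))) := by
        have hs := hsin.1
        rw [habsz1, div_eq_div_iff (by positivity) (ne_of_gt hs)]
        ring
    _ ≤ 1 / (2 * min ((v:ℝ)/q) (1 - (v:ℝ)/q)) := by
        apply one_div_le_one_div_of_le
        · have h1 : (0:ℝ) < 1 - (v:ℝ)/q := by linarith
          have := lt_min hxpos h1
          positivity
        · exact hsin.2
    _ ≤ (q:ℝ)/(2*v) + (q:ℝ)/(2*((q:ℝ) - v)) := by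
        have h1 : (0:ℝ) < 1 - (v:ℝ)/q := by linarith
        have hqv : (0:ℝ) < (q:ℝ) - v := by
          have : (v:ℝ) < q := by exact_mod_cast hvq
          linarith
        have e1 : (q:ℝ)/(2*v) = 1/(2*((v:ℝ)/q)) := by
          field_simp
        have e2 : (q:ℝ)/(2*((q:ℝ) - v)) = 1/(2*(1 - (v:ℝ)/q)) := by
          rw [eq_div_iff (by positivity)]
          field_simp
          try ring
        rw [e1, e2]
        rcases le_total ((v:ℝ)/q) (1 - (v:ℝ)/q) with h | h
        · rw [min_eq_left h]
          have : (0:ℝ) < 1/(2*(1 - (v:ℝ)/q)) := by positivity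
          linarith
        · rw [min_eq_right h]
          have : (0:ℝ) < 1/(2*((v:ℝ)/q)) := by positivity
          linarith

/-- The Pólya–Vinogradov inequality: there is an absolute constant `C` such that for
every prime `q`, every nontrivial Dirichlet character `χ` mod `q`, every integer `M`
and every `1 ≤ N ≤ q`, `|∑_{M < n ≤ M+N} χ(n)| ≤ C √q log q`. -/
theorem stmt_4 :
    ∃ C : ℝ, ∀ q : ℕ, q.Prime → ∀ χ : DirichletCharacter ℂ q, χ ≠ 1 →
      ∀ M : ℤ, ∀ N : ℕ, 1 ≤ N → N ≤ q →
        ‖∑ n ∈ Finset.Ioc M (M + (N : ℤ)), χ (n : ZMod q)‖ ≤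
          C * Real.sqrt q * Real.log q := by
  use 2
  intro q hq χ hχ M N hN1 hNq
  have : Fact q.Prime := ⟨hq⟩
  have hq2 : q ≠ 2 := by
    rintro rfl
    apply hχ
    apply MulChar.ext
    intro a
    fin_cases a <;> simp <;> exact (map_one χ).trans (map_one _).symm
  have hq3 : 3 ≤ q := by
    have := hq.two_le; omega
  have hq0 : (0:ℝ) < q := by positivity
  set ψ : AddChar (ZMod q) ℂ := ZMod.stdAddChar with hψdef
  have hχinv : χ⁻¹ ≠ 1 := by simpa using hχ
  set τ : ℂ := gaussSum χ⁻¹ ψ with hτdef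
  have hτabs : ‖τ‖ = Real.sqrt q := pv_abs_gauss hq χ⁻¹ hχinv
  have hsq : (0:ℝ) < Real.sqrt q := Real.sqrt_pos.mpr hq0
  set S : ℂ := ∑ n ∈ Finset.Ioc M (M + (N : ℤ)), χ (n : ZMod q) with hSdef
  have hcomp : ∀ x : ZMod q, χ x * τ = ∑ a : ZMod q, χ⁻¹ a * ψ (x * a) := by
    intro x
    have h := gaussSum_mulShift_of_isPrimitive ψ (pv_isPrimitive hq χ⁻¹ hχinv) x
    rw [inv_inv] at h
    rw [← h, gaussSum]
    refine Finset.sum_congr rfl fun a _ => ?_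
    rw [AddChar.mulShift_apply]
  have hTS : τ * S
      = ∑ a : ZMod q, χ⁻¹ a * ∑ n ∈ Finset.Ioc M (M + (N:ℤ)), ψ ((n : ZMod q) * a) := by
    calc τ * S = ∑ n ∈ Finset.Ioc M (M + (N:ℤ)), χ (n : ZMod q) * τ := by
          rw [hSdef, Finset.mul_sum]
          exact Finset.sum_congr rfl fun n _ => mul_comm _ _
      _ = ∑ n ∈ Finset.Ioc M (M + (N:ℤ)), ∑ a : ZMod q, χ⁻¹ a * ψ ((n : ZMod q) * a) :=
          Finset.sum_congr rfl fun n _ => hcomp _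
      _ = ∑ a : ZMod q, ∑ n ∈ Finset.Ioc M (M + (N:ℤ)), χ⁻¹ a * ψ ((n : ZMod q) * a) :=
          Finset.sum_comm
      _ = _ := by
          refine Finset.sum_congr rfl fun a _ => ?_
          rw [Finset.mul_sum]
  -- bound on |τ S|
  set g : ZMod q → ℝ := fun a =>
    if a = 0 then 0 else (q:ℝ)/(2*a.val) + (q:ℝ)/(2*((q:ℝ) - a.val)) with hgdef
  have hbound : ‖τ * S‖ ≤ ∑ a : ZMod q, g a := by
    rw [hTS]
    refine (norm_sum_le _ _).trans ?_
    refine Finset.sum_le_sum fun a _ => ?_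
    rw [norm_mul]
    by_cases ha : a = 0
    · have h0 : χ⁻¹ (0 : ZMod q) = 0 :=
        MulChar.map_nonunit _ (by simpa using not_isUnit_zero (M₀ := ZMod q))
      rw [ha, h0]
      simp [hgdef]
    · rw [hgdef]
      simp only [ha, if_false]
      calc ‖χ⁻¹ a‖ * ‖∑ n ∈ Finset.Ioc M (M + (N:ℤ)), ψ ((n:ZMod q)*a)‖
          ≤ 1 * ((q:ℝ)/(2*a.val) + (q:ℝ)/(2*((q:ℝ) - a.val))) := by
            apply mul_le_mul
            · exact DirichletCharacter.norm_le_one χ⁻¹ a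
            · exact pv_inner M N a ha
            · positivity
            · norm_num
        _ = _ := one_mul _
  -- evaluate the sum of g
  have hsum : ∑ a : ZMod q, g a
      = ∑ v ∈ Finset.Icc 1 (q-1), ((q:ℝ)/(2*v) + (q:ℝ)/(2*((q:ℝ) - v))) := by
    rw [← Finset.sum_erase (Finset.univ) (by simp [hgdef] : g 0 = 0)]
    refine Finset.sum_nbij' (fun a => a.val) (fun v => (v : ZMod q)) ?_ ?_ ?_ ?_ ?_
    · intro a ha
      simp only [Finset.mem_erase, Finset.mem_univ, and_true] at ha
      simp only [Finset.mem_Icc]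
      have h1 : a.val ≠ 0 := fun h => ha ((ZMod.val_eq_zero a).mp h)
      have h2 := ZMod.val_lt a
      omega
    · intro v hv
      simp only [Finset.mem_Icc] at hv
      simp only [Finset.mem_erase, Finset.mem_univ, and_true]
      intro h
      have := (ZMod.natCast_eq_zero_iff v q).mp h
      have := Nat.le_of_dvd (by omega) this
      omega
    · intro a ha
      simp [ZMod.natCast_val, ZMod.cast_id]
    · intro v hv
      simp only [Finset.mem_Icc] at hv
      apply ZMod.val_cast_of_lt
      omega
    · intro a ha
      simp only [Finset.mem_erase, Finset.mem_univ, and_true] at ha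
      simp only [hgdef, ha, if_false]
  have hrefl : ∑ v ∈ Finset.Icc 1 (q-1), (q:ℝ)/(2*((q:ℝ) - v))
      = ∑ v ∈ Finset.Icc 1 (q-1), (q:ℝ)/(2*v) := by
    refine Finset.sum_nbij' (fun v => q - v) (fun v => q - v) ?_ ?_ ?_ ?_ ?_
    · intro v hv; simp only [Finset.mem_Icc] at *; omega
    · intro v hv; simp only [Finset.mem_Icc] at *; omega
    · intro v hv; simp only [Finset.mem_Icc] at hv; omega
    · intro v hv; simp only [Finset.mem_Icc] at hv; omega
    · intro v hv
      simp only [Finset.mem_Icc] at hv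
      congr 2
      have : ((q - v : ℕ) : ℝ) = (q:ℝ) - v := by
        push_cast [Nat.cast_sub (by omega : v ≤ q)]
        ring
      rw [this]
  have hharm : ∑ v ∈ Finset.Icc 1 (q-1), ((q:ℝ)/(2*v) + (q:ℝ)/(2*((q:ℝ) - v)))
      ≤ (q:ℝ) * (1 + Real.log q) := by
    rw [Finset.sum_add_distrib, hrefl, ← two_mul]
    have e : (2:ℝ) * ∑ v ∈ Finset.Icc 1 (q-1), (q:ℝ)/(2*v)
        = (q:ℝ) * ∑ v ∈ Finset.Icc 1 (q-1), ((v:ℝ))⁻¹ := by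
      rw [Finset.mul_sum, Finset.mul_sum]
      refine Finset.sum_congr rfl fun v hv => ?_
      simp only [Finset.mem_Icc] at hv
      have hv0 : (0:ℝ) < v := by exact_mod_cast hv.1
      field_simp
    rw [e]
    have hH : ∑ v ∈ Finset.Icc 1 (q-1), ((v:ℝ))⁻¹ = ((harmonic (q-1) : ℚ) : ℝ) := by
      rw [harmonic_eq_sum_Icc]
      push_cast
      rfl
    rw [hH]
    have h1 : ((harmonic (q-1) : ℚ) : ℝ) ≤ 1 + Real.log (q-1 : ℕ) := harmonic_le_one_add_log _
    have h2 : Real.log ((q-1 : ℕ) : ℝ) ≤ Real.log q := by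
      apply Real.log_le_log
      · exact_mod_cast (by omega : 0 < q - 1)
      · exact_mod_cast (by omega : q - 1 ≤ q)
    have := h1.trans (by linarith : 1 + Real.log ((q-1:ℕ):ℝ) ≤ 1 + Real.log q)
    have hq0' : (0:ℝ) ≤ q := le_of_lt hq0
    nlinarith
  -- combine
  have hfinal : Real.sqrt q * ‖S‖ ≤ (q:ℝ) * (1 + Real.log q) := by
    calc Real.sqrt q * ‖S‖ = ‖τ‖ * ‖S‖ := by rw [hτabs]
      _ = ‖τ * S‖ := (norm_mul τ S).symm
      _ ≤ ∑ a : ZMod q, g a := hbound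
      _ = _ := hsum
      _ ≤ _ := hharm
  have hlog1 : (1:ℝ) ≤ Real.log q := by
    rw [Real.le_log_iff_exp_le hq0]
    calc Real.exp 1 ≤ 2.7182818286 := (Real.exp_one_lt_d9).le
      _ ≤ 3 := by norm_num
      _ ≤ q := by exact_mod_cast hq3
  have hqq : (q:ℝ) = Real.sqrt q * Real.sqrt q := (Real.mul_self_sqrt (le_of_lt hq0)).symm
  have hS2 : ‖S‖ ≤ Real.sqrt q * (1 + Real.log q) := by
    by_contra hcon
    push_neg at hcon
    have hlt : Real.sqrt q * (Real.sqrt q * (1 + Real.log q)) < Real.sqrt q * ‖S‖ :=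
      mul_lt_mul_of_pos_left hcon hsq
    rw [← mul_assoc, ← hqq] at hlt
    linarith
  calc ‖S‖ ≤ Real.sqrt q * (1 + Real.log q) := hS2
    _ ≤ Real.sqrt q * (2 * Real.log q) := by nlinarith
    _ = 2 * Real.sqrt q * Real.log q := by ring
end

section
/- Let V : ℝ → ℂ be a smooth compactly supported function. There exists a constant Catalog = C(V) depending only on V such that for every prime q, every function K : ℤ/qℤ → ℂ, and every real number N with 1 ≤ N ≤ q, one has |∑_{n ∈ ℤ} K(n mod q) V(n/N)| ≤ C q^{1/2} · max_{y ∈ ℤ/qℤ} |K̂(y)|, where K̂(y) = q^{-1/2} ∑_{x ∈ ℤ/qℤ} K(x) e(xy/q). -/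
open Complex Finset

noncomputable def pvE (q : ℕ) (a : ℤ) : ℂ := Complex.exp (2 * Real.pi * Complex.I * a / q)

lemma pvE_mul_int (q : ℕ) (a b : ℤ) : pvE q (a * b) = pvE q a ^ b := by
  rw [pvE, pvE, ← Complex.exp_int_mul]
  congr 1
  push_cast
  ring

lemma pvE_abs (q : ℕ) (a : ℤ) : ‖(pvE q a)‖ = 1 := by
  have h : (2 * (Real.pi:ℂ) * Complex.I * a / q) = ((2 * Real.pi * a / q : ℝ) : ℂ) * Complex.I := by
    push_cast; ring
  rw [pvE, h, Complex.norm_exp_ofReal_mul_I]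

lemma pvE_ne_zero (q : ℕ) (a : ℤ) : pvE q a ≠ 0 := Complex.exp_ne_zero _

lemma pvE_eq_one (q : ℕ) (hq : q ≠ 0) (a : ℤ) (ha : (q:ℤ) ∣ a) : pvE q a = 1 := by
  obtain ⟨k, rfl⟩ := ha
  rw [pvE]
  have hq' : (q:ℂ) ≠ 0 := Nat.cast_ne_zero.mpr hq
  have h : (2 * (Real.pi:ℂ) * Complex.I * (((q:ℤ) * k : ℤ) : ℂ) / q) = (k:ℤ) * (2 * Real.pi * Complex.I) := by
    push_cast
    field_simp
  rw [h, Complex.exp_int_mul_two_pi_mul_I]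

lemma pvE_ne_one (q : ℕ) (hq : q ≠ 0) (a : ℤ) (ha : ¬ ((q:ℤ) ∣ a)) : pvE q a ≠ 1 := by
  intro h
  rw [pvE, Complex.exp_eq_one_iff] at h
  obtain ⟨n, hn⟩ := h
  apply ha
  refine ⟨n, ?_⟩
  have hq' : (q:ℂ) ≠ 0 := Nat.cast_ne_zero.mpr hq
  have hpi : (2 * (Real.pi:ℂ) * Complex.I) ≠ 0 := by
    simp [Real.pi_ne_zero, Complex.I_ne_zero]
  have : (a : ℂ) = (q:ℂ) * n := by
    field_simp at hn
    have h2 : (2 * (Real.pi:ℂ) * Complex.I) * a = (2 * (Real.pi:ℂ) * Complex.I) * (q * n) := by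
      rw [mul_comm] at hn ⊢
      linear_combination (2 * (Real.pi:ℂ) * Complex.I) * hn
    exact mul_left_cancel₀ hpi h2
  exact_mod_cast this

lemma pvE_orth (q : ℕ) (hq : q ≠ 0) (a : ℤ) :
    ∑ y ∈ Finset.range q, pvE q (a * y) = if (q:ℤ) ∣ a then (q:ℂ) else 0 := by
  have hterm : ∀ y : ℕ, pvE q (a * y) = pvE q a ^ y := by
    intro y
    rw [← zpow_natCast, ← pvE_mul_int]
  simp only [hterm]
  by_cases h : (q:ℤ) ∣ a
  · rw [if_pos h]
    simp [pvE_eq_one q hq a h]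
  · rw [if_neg h, geom_sum_eq (pvE_ne_one q hq a h)]
    have : pvE q a ^ q = 1 := by
      rw [← zpow_natCast, ← pvE_mul_int, mul_comm, pvE_eq_one q hq _ ⟨a, rfl⟩]
    rw [this, sub_self, zero_div]

lemma shift_tsum (f : ℤ → ℂ) (s : Finset ℤ) (hf : ∀ n ∉ s, f n = 0) (z : ℂ) (hz : z ≠ 0) :
    (1 - z) * ∑' n : ℤ, f n * z ^ n = ∑' n : ℤ, (f n - f (n-1)) * z ^ n := by
  have hsum : Summable (fun n : ℤ => f n * z ^ n) :=
    summable_of_ne_finset_zero (s := s) (fun n hn => by rw [hf n hn, zero_mul])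
  have hsum' : Summable (fun n : ℤ => f (n-1) * z ^ n) := by
    refine summable_of_ne_finset_zero (s := s.image (· + 1)) (fun n hn => ?_)
    have : n - 1 ∉ s := fun h => hn (Finset.mem_image.mpr ⟨n-1, h, by ring⟩)
    rw [hf _ this, zero_mul]
  have key : z * ∑' n : ℤ, f n * z ^ n = ∑' n : ℤ, f (n-1) * z ^ n := by
    rw [← tsum_mul_left]
    have := (Equiv.addRight (1:ℤ)).tsum_eq (fun n : ℤ => f (n-1) * z ^ n)
    rw [← this]
    congr 1
    funext n
    simp only [Equiv.coe_addRight, add_sub_cancel_right]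
    rw [zpow_add_one₀ hz]
    ring
  rw [sub_mul, one_mul, key, ← Summable.tsum_sub hsum hsum']
  congr 1
  funext n
  ring

lemma second_diff_tsum (f : ℤ → ℂ) (s : Finset ℤ) (hf : ∀ n ∉ s, f n = 0) (z : ℂ) (hz : z ≠ 0) :
    (1 - z)^2 * ∑' n : ℤ, f n * z ^ n
      = ∑' n : ℤ, ((f n - f (n-1)) - (f (n-1) - f (n-2))) * z ^ n := by
  have h1 := shift_tsum f s hf z hz
  have h2 := shift_tsum (fun n => f n - f (n-1)) (s ∪ s.image (· + 1))
    (fun n hn => by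
      have h1 : n ∉ s := fun h => hn (Finset.mem_union_left _ h)
      have h2 : n - 1 ∉ s := fun h => hn (Finset.mem_union_right _ (Finset.mem_image.mpr ⟨n-1, h, by ring⟩))
      rw [hf n h1, hf _ h2, sub_zero]) z hz
  calc (1 - z)^2 * ∑' n : ℤ, f n * z ^ n
      = (1-z) * ((1-z) * ∑' n : ℤ, f n * z ^ n) := by ring
    _ = (1-z) * ∑' n : ℤ, (f n - f (n-1)) * z ^ n := by rw [h1]
    _ = ∑' n : ℤ, ((f n - f (n-1)) - (f (n-1) - f (n-2))) * z ^ n := by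
        rw [h2]; congr 1; funext n; congr 2 <;> ring_nf


lemma pvE_add (q : ℕ) (a b : ℤ) : pvE q (a + b) = pvE q a * pvE q b := by
  rw [pvE, pvE, pvE, ← Complex.exp_add]
  congr 1
  push_cast
  ring


lemma main_identity (q : ℕ) [NeZero q] (K : ZMod q → ℂ) (f : ℤ → ℂ) (s : Finset ℤ) :
    ∑ n ∈ s, K (n : ZMod q) * f n
      = (q:ℂ)⁻¹ * ∑ y ∈ Finset.range q,
          (∑ x ∈ Finset.range q, K (x : ZMod q) * pvE q (x * y)) *
          (∑ n ∈ s, f n * pvE q (-(n * y))) := by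
  have hq : q ≠ 0 := NeZero.ne q
  have hqC : (q:ℂ) ≠ 0 := Nat.cast_ne_zero.mpr hq
  have expand : ∀ y ∈ Finset.range q,
      (∑ x ∈ Finset.range q, K (x : ZMod q) * pvE q (x * y)) * (∑ n ∈ s, f n * pvE q (-(n * y)))
        = ∑ x ∈ Finset.range q, ∑ n ∈ s, K (x:ZMod q) * f n * pvE q (((x:ℤ) - n) * y) := by
    intro y _
    rw [Finset.sum_mul_sum]
    refine Finset.sum_congr rfl fun x _ => Finset.sum_congr rfl fun n _ => ?_
    rw [show ((x:ℤ) - n) * y = (x:ℤ) * y + (-(n * y)) by ring, pvE_add]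
    ring
  rw [Finset.sum_congr rfl expand, Finset.sum_comm]
  have swap2 : ∀ x ∈ Finset.range q,
      ∑ y ∈ Finset.range q, ∑ n ∈ s, K (x:ZMod q) * f n * pvE q (((x:ℤ) - n) * y)
        = ∑ n ∈ s, K (x:ZMod q) * f n * (if (q:ℤ) ∣ ((x:ℤ) - n) then (q:ℂ) else 0) := by
    intro x _
    rw [Finset.sum_comm]
    refine Finset.sum_congr rfl fun n _ => ?_
    rw [← Finset.mul_sum, pvE_orth q hq]
  rw [Finset.sum_congr rfl swap2, Finset.sum_comm]
  have inner : ∀ n ∈ s,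
      ∑ x ∈ Finset.range q, K (x:ZMod q) * f n * (if (q:ℤ) ∣ ((x:ℤ) - n) then (q:ℂ) else 0)
        = (q:ℂ) * (K (n : ZMod q) * f n) := by
    intro n _
    rw [Finset.sum_eq_single_of_mem ((n : ZMod q)).val (Finset.mem_range.mpr (ZMod.val_lt _))]
    · have hdvd : (q:ℤ) ∣ ((((n : ZMod q)).val : ℤ) - n) := by
        rw [← ZMod.intCast_zmod_eq_zero_iff_dvd]
        push_cast
        simp [ZMod.natCast_val, ZMod.cast_id]
      rw [if_pos hdvd]
      have : ((((n : ZMod q)).val : ℕ) : ZMod q) = (n : ZMod q) := by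
        simp [ZMod.natCast_val, ZMod.cast_id]
      rw [this]
      ring
    · intro x hx hxne
      have : ¬ ((q:ℤ) ∣ ((x:ℤ) - n)) := by
        intro hdvd
        apply hxne
        have h0 := (ZMod.intCast_zmod_eq_zero_iff_dvd ((x:ℤ) - n) q).mpr hdvd
        push_cast at h0
        have hcast : ((x : ℕ) : ZMod q) = (n : ZMod q) := sub_eq_zero.mp h0
        have := congrArg ZMod.val hcast
        rwa [ZMod.val_cast_of_lt (Finset.mem_range.mp hx)] at this
      rw [if_neg this, mul_zero]
  rw [Finset.sum_congr rfl inner, ← Finset.mul_sum, ← mul_assoc, inv_mul_cancel₀ hqC, one_mul]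


lemma abs_one_sub_exp (θ : ℝ) :
    ‖(1 - Complex.exp ((θ:ℂ) * Complex.I))‖ = 2 * |Real.sin (θ/2)| := by
  rw [Complex.exp_mul_I]
  have h : 1 - (Complex.cos θ + Complex.sin θ * Complex.I)
      = ((1 - Real.cos θ : ℝ) : ℂ) + ((-Real.sin θ : ℝ) : ℂ) * Complex.I := by
    push_cast; ring
  rw [h, Complex.norm_add_mul_I, Real.abs_sin_half]
  have h2 : (1 - Real.cos θ)^2 + (-Real.sin θ)^2 = 2^2 * ((1 - Real.cos θ)/2) := by
    nlinarith [Real.sin_sq_add_cos_sq θ]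
  rw [h2, Real.sqrt_mul (by positivity), Real.sqrt_sq (by norm_num)]

lemma pvE_neg_eq_exp (q : ℕ) (y : ℕ) :
    pvE q (-(y:ℤ)) = Complex.exp (((-(2 * Real.pi * y / q) : ℝ) : ℂ) * Complex.I) := by
  rw [pvE]; congr 1; push_cast; ring

lemma abs_one_sub_pvE (q : ℕ) (y : ℕ) (hy : 0 < y) (hyq : y < q) :
    2 * ((min y (q - y) : ℕ) : ℝ) / q ≤ ‖(1 - pvE q (-(y:ℤ)))‖ := by
  have hq : 0 < q := lt_trans hy hyq
  have hqR : (0:ℝ) < q := by exact_mod_cast hq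
  rw [pvE_neg_eq_exp, abs_one_sub_exp]
  have habs : |Real.sin (-(2 * Real.pi * y / q) / 2)| = Real.sin (Real.pi * y / q) := by
    rw [show -(2 * Real.pi * y / q) / 2 = -(Real.pi * y / q) by ring, Real.sin_neg, abs_neg,
      _root_.abs_of_nonneg]
    apply Real.sin_nonneg_of_nonneg_of_le_pi
    · positivity
    · rw [div_le_iff₀ hqR]
      have : (y:ℝ) ≤ q := by exact_mod_cast hyq.le
      nlinarith [Real.pi_pos]
  rw [habs]
  set m : ℕ := min y (q - y) with hm
  have hsin : Real.sin (Real.pi * y / q) = Real.sin (Real.pi * m / q) := by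
    rcases min_choice y (q - y) with h | h
    · rw [hm, h]
    · rw [hm, h]
      have hyq' : (q - y : ℕ) = (q:ℝ) - y := by
        push_cast [Nat.cast_sub hyq.le]; ring
      rw [hyq', show Real.pi * ((q:ℝ) - y) / q = Real.pi - Real.pi * y / q by field_simp,
        Real.sin_pi_sub]
  rw [hsin]
  have hm2 : 2 * (m:ℝ) ≤ q := by
    have h1 : (m:ℕ) ≤ y := min_le_left _ _
    have h2 : (m:ℕ) ≤ q - y := min_le_right _ _
    have : 2 * m ≤ q := by omega
    exact_mod_cast this
  have hmpos : 0 ≤ (m:ℝ) := Nat.cast_nonneg m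
  have hjordan := Real.mul_le_sin (x := Real.pi * m / q) (by positivity)
    (by rw [div_le_iff₀ hqR]; nlinarith [Real.pi_pos])
  calc 2 * (m:ℝ) / q = 2 / Real.pi * (Real.pi * m / q) := by
        field_simp
    _ ≤ Real.sin (Real.pi * m / q) := hjordan
    _ ≤ 2 * Real.sin (Real.pi * m / q) := by
        nlinarith [Real.sin_nonneg_of_nonneg_of_le_pi (x := Real.pi * m / q) (by positivity)
          (by rw [div_le_iff₀ hqR]; nlinarith [Real.pi_pos])]

lemma sum_inv_sq_le (t K : ℕ) (ht : 1 ≤ t) :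
    ∑ k ∈ Finset.Ico (t+1) K, (1:ℝ)/(k:ℝ)^2 ≤ 1/t := by
  rw [Finset.sum_Ico_eq_sum_range]
  have hle : ∑ i ∈ Finset.range (K - (t+1)), (1:ℝ)/((t+1+i:ℕ):ℝ)^2
      ≤ ∑ i ∈ Finset.range (K - (t+1)), ((1:ℝ)/((t+i:ℕ):ℝ) - 1/((t+(i+1):ℕ):ℝ)) := by
    apply Finset.sum_le_sum
    intro i _
    have ha : (1:ℝ) ≤ ((t+i:ℕ):ℝ) := by exact_mod_cast Nat.le_add_right_of_le ht
    have ha0 : (0:ℝ) < ((t+i:ℕ):ℝ) := lt_of_lt_of_le zero_lt_one ha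
    have hcast : ((t+1+i:ℕ):ℝ) = ((t+i:ℕ):ℝ) + 1 := by push_cast; ring
    have hcast2 : ((t+(i+1):ℕ):ℝ) = ((t+i:ℕ):ℝ) + 1 := by push_cast; ring
    rw [hcast, hcast2]
    set a : ℝ := ((t+i:ℕ):ℝ)
    have key : (1:ℝ)/a - 1/(a+1) = 1/(a*(a+1)) := by field_simp; ring
    rw [key]
    gcongr
    nlinarith
  refine le_trans hle ?_
  have := Finset.sum_range_sub' (fun i => (1:ℝ)/((t+i:ℕ):ℝ)) (K - (t+1))
  rw [this]
  have h1 : (1:ℝ)/((t+(K-(t+1)):ℕ):ℝ) ≥ 0 := by positivity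
  simp only [Nat.add_zero]
  linarith

lemma sd_bound (V : ℝ → ℂ) (hV : ContDiff ℝ (⊤ : ℕ∞) V) (N : ℝ) (hN : 0 < N) (A₂ : ℝ)
    (hA₂ : ∀ x, ‖deriv (deriv V) x‖ ≤ A₂) (a b : ℝ) :
    ‖(V ((b+1)/N) - V (b/N)) - ((V ((a+1)/N) - V (a/N)))‖ ≤ A₂ / N^2 * ‖b - a‖ := by
  have hVd : Differentiable ℝ V := hV.differentiable (by simp)
  have hV' : ContDiff ℝ (⊤ : ℕ∞) (deriv V) := (contDiff_infty_iff_deriv.mp hV).2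
  have hV'd : Differentiable ℝ (deriv V) := hV'.differentiable (by simp)
  have hA₂0 : 0 ≤ A₂ := le_trans (norm_nonneg _) (hA₂ 0)
  have hd1 : ∀ u v : ℝ, ‖deriv V u - deriv V v‖ ≤ A₂ * ‖u - v‖ := fun u v =>
    Convex.norm_image_sub_le_of_norm_deriv_le (fun x _ => hV'd x)
      (fun x _ => hA₂ x) convex_univ trivial trivial
  set D : ℝ → ℂ := fun x => V ((x+1)/N) - V (x/N) with hD
  have hDer : ∀ x : ℝ, HasDerivAt D ((1/N : ℝ) • (deriv V ((x+1)/N) - deriv V (x/N))) x := by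
    intro x
    have h1 : HasDerivAt (fun x : ℝ => (x+1)/N) (1/N) x := by
      simpa using ((hasDerivAt_id x).add_const 1).div_const N
    have h0 : HasDerivAt (fun x : ℝ => x/N) (1/N) x := by
      simpa using (hasDerivAt_id x).div_const N
    have c1 : HasDerivAt (fun x : ℝ => V ((x+1)/N)) ((1/N : ℝ) • deriv V ((x+1)/N)) x :=
      ((hVd ((x+1)/N)).hasDerivAt).scomp x h1
    have c0 : HasDerivAt (fun x : ℝ => V (x/N)) ((1/N : ℝ) • deriv V (x/N)) x :=
      ((hVd (x/N)).hasDerivAt).scomp x h0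
    have := c1.sub c0
    rw [← smul_sub] at this
    exact this
  have hDbd : ∀ x : ℝ, ‖deriv D x‖ ≤ A₂ / N^2 := by
    intro x
    rw [(hDer x).deriv, norm_smul]
    have h2 : ‖(x+1)/N - x/N‖ = 1/N := by
      rw [show (x+1)/N - x/N = 1/N by ring, Real.norm_eq_abs, abs_of_pos (by positivity)]
    calc ‖(1:ℝ)/N‖ * ‖deriv V ((x+1)/N) - deriv V (x/N)‖
        ≤ ‖(1:ℝ)/N‖ * (A₂ * ‖(x+1)/N - x/N‖) := by
          gcongr
          exact hd1 _ _
      _ = A₂ / N^2 := by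
          rw [h2, Real.norm_eq_abs, abs_of_pos (by positivity)]
          ring
  exact Convex.norm_image_sub_le_of_norm_deriv_le (fun x _ => (hDer x).differentiableAt)
      (fun x _ => hDbd x) convex_univ trivial trivial

set_option maxHeartbeats 2000000 in
/-- The smoothed Pólya–Vinogradov bound: for a fixed smooth compactly supported
`V : ℝ → ℂ` there is a constant `C = C(V)` such that for every prime `q`, every
function `K : ZMod q → ℂ` and every real `1 ≤ N ≤ q`,
`|∑_{n ∈ ℤ} K(n mod q) V(n/N)| ≤ C √q · max_y |K̂(y)|`. -/
theorem stmt_6 (V : ℝ → ℂ) (hV : ContDiff ℝ (⊤ : ℕ∞) V) (hVc : HasCompactSupport V) :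
    ∃ C : ℝ, ∀ q : ℕ, q.Prime → ∀ K : ZMod q → ℂ, ∀ N : ℝ, 1 ≤ N → N ≤ q →
      ‖(∑' n : ℤ, K (n : ZMod q) * V ((n : ℝ) / N))‖ ≤
        C * Real.sqrt q *
          ⨆ y : ZMod q, ‖((Real.sqrt q : ℂ)⁻¹ *
            ∑ x ∈ Finset.range q, K (x : ZMod q) *
              Complex.exp (2 * (Real.pi : ℂ) * Complex.I *
                ((x : ℂ) * (y.val : ℂ) / (q : ℂ))))‖ := by
  classical
  obtain ⟨R0, hR0⟩ := hVc.isCompact.isBounded.subset_closedBall 0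
  set R := max R0 1 with hRdef
  have hR1 : (1:ℝ) ≤ R := le_max_right _ _
  have hsupp : ∀ x : ℝ, R < |x| → V x = 0 := by
    intro x hx
    by_contra hne
    have hmem : x ∈ tsupport V := subset_closure (by simpa [Function.mem_support] using hne)
    have := hR0 hmem
    rw [Metric.mem_closedBall, Real.dist_eq, sub_zero] at this
    have : R0 ≤ R := le_max_left _ _
    linarith [hR0 hmem, Metric.mem_closedBall.mp (hR0 hmem)]
  obtain ⟨A₀, hA₀⟩ := hVc.exists_bound_of_continuous hV.continuous
  have hVc2 : HasCompactSupport (deriv (deriv V)) := (hVc.deriv).deriv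
  have hV'cd : ContDiff ℝ (⊤:ℕ∞) (deriv V) := (contDiff_infty_iff_deriv.mp hV).2
  have hV''c : Continuous (deriv (deriv V)) := ((contDiff_infty_iff_deriv.mp hV'cd).2).continuous
  obtain ⟨A₂, hA₂⟩ := hVc2.exists_bound_of_continuous hV''c
  set A0 := max A₀ 0 with hA0def
  set A2 := max A₂ 0 with hA2def
  have hA0 : ∀ x, ‖V x‖ ≤ A0 := fun x => le_trans (hA₀ x) (le_max_left _ _)
  have hA2 : ∀ x, ‖deriv (deriv V) x‖ ≤ A2 := fun x => le_trans (hA₂ x) (le_max_left _ _)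
  have hA0nn : 0 ≤ A0 := le_max_right _ _
  have hA2nn : 0 ≤ A2 := le_max_right _ _
  refine ⟨3*(2*R+3)*A0 + (2*R+7)*A2, ?_⟩
  intro q hq K N hN1 hNq
  haveI : NeZero q := ⟨hq.pos.ne'⟩
  have hq0 : 0 < q := hq.pos
  have hqR : (0:ℝ) < q := by exact_mod_cast hq0
  have hN0 : (0:ℝ) < N := lt_of_lt_of_le one_pos hN1
  set f : ℤ → ℂ := fun n => V ((n:ℝ)/N) with hfdef
  have hfsupp : ∀ n : ℤ, R*N < |(n:ℝ)| → f n = 0 := by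
    intro n h
    apply hsupp
    rw [abs_div, abs_of_pos hN0, lt_div_iff₀ hN0]
    linarith [h]
  set M1 : ℕ := ⌈R*N⌉₊ with hM1def
  set M : ℕ := ⌈R*(q:ℝ)⌉₊ with hMdef
  have hRN0 : 0 ≤ R*N := by positivity
  have hM1R : (M1:ℝ) < R*N + 1 := Nat.ceil_lt_add_one hRN0
  have hM1le : R*N ≤ (M1:ℝ) := Nat.le_ceil _
  have hMle : R*N ≤ (M:ℝ) := le_trans (by nlinarith) (Nat.le_ceil (R*(q:ℝ)))
  set s : Finset ℤ := Finset.Icc (-(M:ℤ)) M with hsdef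
  set s1 : Finset ℤ := Finset.Icc (-(M1:ℤ)) M1 with hs1def
  set s2 : Finset ℤ := Finset.Icc (-((M1:ℤ)+2)) ((M1:ℤ)+2) with hs2def
  have habs_int : ∀ (n : ℤ) (T : ℕ), n ∉ Finset.Icc (-(T:ℤ)) (T:ℤ) → (T:ℝ) < |(n:ℝ)| := by
    intro n T hn
    rw [Finset.mem_Icc, not_and_or] at hn
    have : (T:ℤ) < |n| := by
      rcases hn with h | h
      · push_neg at h
        calc (T:ℤ) < -n := by linarith
          _ ≤ |n| := neg_le_abs n
      · push_neg at h
        exact lt_of_lt_of_le h (le_abs_self n)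
    calc (T:ℝ) < ((|n| : ℤ) : ℝ) := by exact_mod_cast this
      _ = |(n:ℝ)| := by push_cast; simp
  have hf_out1 : ∀ n : ℤ, n ∉ s1 → f n = 0 := by
    intro n hn
    exact hfsupp n (lt_of_le_of_lt hM1le (habs_int n M1 hn))
  have hf_out : ∀ n : ℤ, n ∉ s → f n = 0 := by
    intro n hn
    exact hfsupp n (lt_of_le_of_lt hMle (habs_int n M hn))
  have hts : (∑' n : ℤ, K (n : ZMod q) * V ((n:ℝ)/N)) = ∑ n ∈ s, K (n : ZMod q) * f n := by
    apply tsum_eq_sum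
    intro n hn
    have : f n = 0 := hf_out n hn
    rw [show V ((n:ℝ)/N) = f n from rfl, this, mul_zero]
  rw [hts, main_identity q K f s]
  set S : ℝ := ⨆ y : ZMod q, ‖((Real.sqrt q : ℂ)⁻¹ *
            ∑ x ∈ Finset.range q, K (x : ZMod q) *
              Complex.exp (2 * (Real.pi : ℂ) * Complex.I *
                ((x : ℂ) * (y.val : ℂ) / (q : ℂ))))‖ with hSdef
  have hbdd : BddAbove (Set.range (fun y : ZMod q => ‖((Real.sqrt q : ℂ)⁻¹ *
            ∑ x ∈ Finset.range q, K (x : ZMod q) *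
              Complex.exp (2 * (Real.pi : ℂ) * Complex.I *
                ((x : ℂ) * (y.val : ℂ) / (q : ℂ))))‖)) := Set.Finite.bddAbove (Set.finite_range _)
  have hSnn : 0 ≤ S := le_trans (norm_nonneg _) (le_ciSup hbdd (0 : ZMod q))
  have hsq0 : 0 < Real.sqrt q := Real.sqrt_pos.mpr hqR
  -- bound on the K-sums
  have hGS : ∀ y ∈ Finset.range q,
      ‖(∑ x ∈ Finset.range q, K (x : ZMod q) * pvE q ((x:ℤ) * (y:ℤ)))‖
        ≤ Real.sqrt q * S := by
    intro y hy
    have hyq : y < q := Finset.mem_range.mp hy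
    have hval : ((y : ZMod q)).val = y := ZMod.val_cast_of_lt hyq
    have hsum_eq : (∑ x ∈ Finset.range q, K (x : ZMod q) *
              Complex.exp (2 * (Real.pi : ℂ) * Complex.I *
                ((x : ℂ) * ((((y:ZMod q)).val : ℕ) : ℂ) / (q : ℂ))))
        = ∑ x ∈ Finset.range q, K (x : ZMod q) * pvE q ((x:ℤ) * (y:ℤ)) := by
      refine Finset.sum_congr rfl fun x _ => ?_
      rw [hval, pvE]
      congr 1
      push_cast
      ring
    have hle := le_ciSup hbdd ((y : ZMod q))
    rw [← hSdef] at hle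
    rw [hsum_eq] at hle
    rw [norm_mul, norm_inv, Complex.norm_real, Real.norm_eq_abs, _root_.abs_of_nonneg (Real.sqrt_nonneg _)] at hle
    calc ‖(∑ x ∈ Finset.range q, K (x : ZMod q) * pvE q ((x:ℤ) * (y:ℤ)))‖
        = Real.sqrt q * ((Real.sqrt q)⁻¹ *
            ‖(∑ x ∈ Finset.range q, K (x : ZMod q) * pvE q ((x:ℤ) * (y:ℤ)))‖) := by
          field_simp
      _ ≤ Real.sqrt q * S := by
          gcongr

  -- cardinalities
  have hcard1 : ((s1.card : ℕ) : ℝ) ≤ (2*R+3)*N := by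
    have hc : s1.card = 2*M1+1 := by
      rw [hs1def, Int.card_Icc]
      omega
    rw [hc]
    push_cast
    nlinarith [hM1R, hN1, hR1]
  have hcard2 : ((s2.card : ℕ) : ℝ) ≤ (2*R+7)*N := by
    have hc : s2.card = 2*M1+5 := by
      rw [hs2def, Int.card_Icc]
      omega
    rw [hc]
    push_cast
    nlinarith [hM1R, hN1, hR1]
  have hs1s : s1 ⊆ s := by
    apply Finset.Icc_subset_Icc <;>
    · have : (M1:ℤ) ≤ (M:ℤ) := by
        exact_mod_cast Nat.ceil_le_ceil (by nlinarith : R*N ≤ R*(q:ℝ))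
      omega
  -- trivial bound
  have htriv : ∀ y : ℕ, ‖(∑ n ∈ s, f n * pvE q (-(n * (y:ℤ))))‖
      ≤ (2*R+3)*A0*N := by
    intro y
    have heq : ∑ n ∈ s, f n * pvE q (-(n * (y:ℤ))) = ∑ n ∈ s1, f n * pvE q (-(n * (y:ℤ))) := by
      symm
      apply Finset.sum_subset hs1s
      intro n _ hn
      rw [hf_out1 n hn, zero_mul]
    rw [heq]
    calc ‖(∑ n ∈ s1, f n * pvE q (-(n * (y:ℤ))))‖
        ≤ ∑ n ∈ s1, ‖(f n * pvE q (-(n * (y:ℤ))))‖ := norm_sum_le _ _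
      _ ≤ ∑ n ∈ s1, A0 := by
          apply Finset.sum_le_sum
          intro n _
          rw [norm_mul, pvE_abs, mul_one]
          exact hA0 _
      _ = (s1.card : ℝ) * A0 := by rw [Finset.sum_const, nsmul_eq_mul]
      _ ≤ ((2*R+3)*N) * A0 := by gcongr
      _ = (2*R+3)*A0*N := by ring
  -- second-difference bound
  have hgb : ∀ n : ℤ, ‖(f n - f (n-1)) - (f (n-1) - f (n-2))‖ ≤ A2 / N^2 := by
    intro n
    have key := sd_bound V hV N hN0 A2 hA2 ((n:ℝ)-2) ((n:ℝ)-1)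
    have h1 : ((n:ℝ)-1)+1 = (n:ℝ) := by ring
    have h2 : ((n:ℝ)-2)+1 = (n:ℝ)-1 := by ring
    have h3 : ‖((n:ℝ)-1) - ((n:ℝ)-2)‖ = 1 := by
      rw [show ((n:ℝ)-1) - ((n:ℝ)-2) = 1 by ring, norm_one]
    rw [h1, h2, h3, mul_one] at key
    have hc1 : ((n-1 : ℤ):ℝ) = (n:ℝ)-1 := by push_cast; ring
    have hc2 : ((n-2 : ℤ):ℝ) = (n:ℝ)-2 := by push_cast; ring
    simp only [hfdef, hc1, hc2]
    exact key
  have hg_out : ∀ n : ℤ, n ∉ s2 → (f n - f (n-1)) - (f (n-1) - f (n-2)) = 0 := by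
    intro n hn
    rw [hs2def, Finset.mem_Icc, not_and_or] at hn
    have e0 : f n = 0 := by
      apply hf_out1
      rw [hs1def, Finset.mem_Icc]
      omega
    have e1 : f (n-1) = 0 := by
      apply hf_out1
      rw [hs1def, Finset.mem_Icc]
      omega
    have e2 : f (n-2) = 0 := by
      apply hf_out1
      rw [hs1def, Finset.mem_Icc]
      omega
    rw [e0, e1, e2]
    ring
  have hden : ∀ y : ℕ, 0 < y → y < q →
      ‖(∑ n ∈ s, f n * pvE q (-(n * (y:ℤ))))‖
        ≤ ((2*R+7)*A2/4) * (q:ℝ)^2 / (N * (((min y (q-y) : ℕ)):ℝ)^2) := by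
    intro y hy hyq
    set z : ℂ := pvE q (-(y:ℤ)) with hzdef
    have hz0 : z ≠ 0 := pvE_ne_zero q _
    have hzn1 : z ≠ 1 := by
      apply pvE_ne_one q hq0.ne'
      rw [Int.dvd_neg]
      intro hdvd
      have h2 : q ∣ y := Int.ofNat_dvd.mp (by exact_mod_cast hdvd)
      exact absurd (Nat.le_of_dvd hy h2) (by omega)
    have hz1ne : (1:ℂ) - z ≠ 0 := fun h => hzn1 (by linear_combination -h)
    have hW_z : ∑ n ∈ s, f n * pvE q (-(n * (y:ℤ))) = ∑ n ∈ s, f n * z ^ n := by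
      refine Finset.sum_congr rfl fun n _ => ?_
      rw [hzdef, ← pvE_mul_int]
      congr 1
      ring
    have htsum : (∑' n : ℤ, f n * z ^ n) = ∑ n ∈ s, f n * z ^ n :=
      tsum_eq_sum (fun n hn => by rw [hf_out n hn, zero_mul])
    have key := second_diff_tsum f s hf_out z hz0
    rw [htsum, ← hW_z] at key
    have hT : (∑' n : ℤ, ((f n - f (n-1)) - (f (n-1) - f (n-2))) * z ^ n)
        = ∑ n ∈ s2, ((f n - f (n-1)) - (f (n-1) - f (n-2))) * z ^ n :=
      tsum_eq_sum (fun n hn => by rw [hg_out n hn, zero_mul])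
    rw [hT] at key
    -- numerator bound
    have hnum : ‖(∑ n ∈ s2, ((f n - f (n-1)) - (f (n-1) - f (n-2))) * z ^ n)‖
        ≤ (2*R+7)*A2/N := by
      calc ‖(∑ n ∈ s2, ((f n - f (n-1)) - (f (n-1) - f (n-2))) * z ^ n)‖
          ≤ ∑ n ∈ s2, ‖(((f n - f (n-1)) - (f (n-1) - f (n-2))) * z ^ n)‖ :=
            norm_sum_le _ _
        _ ≤ ∑ n ∈ s2, A2/N^2 := by
            apply Finset.sum_le_sum
            intro n _
            rw [norm_mul, norm_zpow, hzdef, pvE_abs, one_zpow, mul_one]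
            exact hgb n
        _ = (s2.card : ℝ) * (A2/N^2) := by rw [Finset.sum_const, nsmul_eq_mul]
        _ ≤ ((2*R+7)*N) * (A2/N^2) := by gcongr
        _ = (2*R+7)*A2/N := by field_simp
    -- denominator bound
    set m : ℕ := min y (q - y) with hmdef
    have hm1 : 1 ≤ m := le_min hy (by omega)
    have hmR : (0:ℝ) < (m:ℝ) := by exact_mod_cast hm1
    have hlow : 2 * (m:ℝ) / q ≤ ‖(1 - z)‖ := abs_one_sub_pvE q y hy hyq
    have habs_pos : (0:ℝ) < 2 * (m:ℝ) / q := by positivity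
    -- conclude
    have hWval : (∑ n ∈ s, f n * pvE q (-(n * (y:ℤ))))
        = (∑ n ∈ s2, ((f n - f (n-1)) - (f (n-1) - f (n-2))) * z ^ n) / (1-z)^2 := by
      rw [← key]
      field_simp
    have habsz : (0:ℝ) < ‖(1-z)‖ := lt_of_lt_of_le habs_pos hlow
    rw [hWval, norm_div, norm_pow]
    rw [div_le_div_iff₀ (pow_pos habsz 2) (by positivity)]
    have hstep : ‖(∑ n ∈ s2, ((f n - f (n-1)) - (f (n-1) - f (n-2))) * z ^ n)‖
          * (N * ((m:ℝ))^2)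
        ≤ ((2*R+7)*A2/N) * (N * ((m:ℝ))^2) :=
      mul_le_mul_of_nonneg_right hnum (by positivity)
    refine le_trans hstep ?_
    have hsq : (2*(m:ℝ)/q)^2 ≤ ‖(1-z)‖ ^2 := by
      gcongr
    calc ((2*R+7)*A2/N) * (N * ((m:ℝ))^2)
        = ((2*R+7)*A2/4) * (q:ℝ)^2 * ((2*(m:ℝ)/q)^2) := by
          field_simp
          ring
      _ ≤ ((2*R+7)*A2/4) * (q:ℝ)^2 * (‖(1-z)‖)^2 := by
          gcongr

  -- summation over y
  set t : ℕ := ⌊(q:ℝ)/N⌋₊ with htdef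
  have hqN1 : (1:ℝ) ≤ (q:ℝ)/N := by
    rw [le_div_iff₀ hN0]
    linarith
  have ht1 : 1 ≤ t := Nat.le_floor (by exact_mod_cast hqN1)
  have htR : (0:ℝ) < t := by exact_mod_cast ht1
  have htle : (t:ℝ) ≤ (q:ℝ)/N := Nat.floor_le (by positivity)
  have hqt : (q:ℝ) ≤ 2*N*t := by
    have h3 : (q:ℝ)/N - 1 < t := Nat.sub_one_lt_floor _
    have h4 : ((q:ℝ)/N)*N = q := div_mul_cancel₀ _ hN0.ne'
    rcases le_or_gt (q:ℝ) (2*N) with h|h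
    · have h5 : (1:ℝ) ≤ (t:ℝ) := by exact_mod_cast ht1
      nlinarith
    · nlinarith [mul_lt_mul_of_pos_right h3 hN0]
  have hWsum : ∑ y ∈ Finset.range q, ‖(∑ n ∈ s, f n * pvE q (-(n * (y:ℤ))))‖
      ≤ (3*(2*R+3)*A0 + (2*R+7)*A2) * q := by
    rw [← Finset.sum_filter_add_sum_filter_not (Finset.range q) (fun y => min y (q-y) ≤ t)]
    have hpart1 : ∑ y ∈ (Finset.range q).filter (fun y => min y (q-y) ≤ t),
        ‖(∑ n ∈ s, f n * pvE q (-(n * (y:ℤ))))‖ ≤ 3*(2*R+3)*A0*q := by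
      set fs := (Finset.range q).filter (fun y => min y (q-y) ≤ t) with hfsdef
      have hfscard : fs.card ≤ 2*t+1 := by
        have hsub : fs ⊆ Finset.range (t+1) ∪ Finset.Ico (q-t) q := by
          intro y hy
          rw [hfsdef, Finset.mem_filter, Finset.mem_range] at hy
          obtain ⟨hyq, hmin⟩ := hy
          rw [Finset.mem_union, Finset.mem_range, Finset.mem_Ico]
          omega
        calc fs.card ≤ (Finset.range (t+1) ∪ Finset.Ico (q-t) q).card := Finset.card_le_card hsub
          _ ≤ (Finset.range (t+1)).card + (Finset.Ico (q-t) q).card := Finset.card_union_le _ _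
          _ ≤ (t+1) + t := by
              rw [Finset.card_range, Nat.card_Ico]
              omega
          _ = 2*t+1 := by ring
      calc ∑ y ∈ fs, ‖(∑ n ∈ s, f n * pvE q (-(n * (y:ℤ))))‖
          ≤ ∑ y ∈ fs, (2*R+3)*A0*N := Finset.sum_le_sum (fun y _ => htriv y)
        _ = (fs.card : ℝ) * ((2*R+3)*A0*N) := by rw [Finset.sum_const, nsmul_eq_mul]
        _ ≤ (2*(t:ℝ)+1) * ((2*R+3)*A0*N) := by
            have : (fs.card : ℝ) ≤ 2*(t:ℝ)+1 := by exact_mod_cast hfscard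
            gcongr
        _ ≤ (3*(q:ℝ)/N) * ((2*R+3)*A0*N) := by
            have h23 : 2*(t:ℝ)+1 ≤ 3*(q:ℝ)/N := by
              rw [le_div_iff₀ hN0]
              nlinarith [(le_div_iff₀ hN0).mp htle, hNq, hN0]
            gcongr
        _ = 3*(2*R+3)*A0*q := by field_simp
    have hpart2 : ∑ y ∈ (Finset.range q).filter (fun y => ¬ (min y (q-y) ≤ t)),
        ‖(∑ n ∈ s, f n * pvE q (-(n * (y:ℤ))))‖ ≤ (2*R+7)*A2*q := by
      set fc := (Finset.range q).filter (fun y => ¬ (min y (q-y) ≤ t)) with hfcdef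
      have hmem : ∀ y ∈ fc, y < q ∧ t+1 ≤ y ∧ t+1 ≤ q - y := by
        intro y hy
        rw [hfcdef, Finset.mem_filter, Finset.mem_range] at hy
        omega
      set B := (2*R+7)*A2/4 with hBdef
      have hBnn : 0 ≤ B := by rw [hBdef]; positivity
      have hterm : ∀ y ∈ fc, ‖(∑ n ∈ s, f n * pvE q (-(n * (y:ℤ))))‖
          ≤ B * (q:ℝ)^2/N * ((1:ℝ)/((y:ℝ))^2 + 1/(((q-y : ℕ)):ℝ)^2) := by
        intro y hy
        obtain ⟨hyq, hyt, hqyt⟩ := hmem y hy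
        have hy0 : 0 < y := by omega
        have hd := hden y hy0 hyq
        have hy0R : (0:ℝ) < (y:ℝ) := by exact_mod_cast hy0
        have hqy0R : (0:ℝ) < ((q-y:ℕ):ℝ) := by
          have : 0 < q - y := by omega
          exact_mod_cast this
        set a : ℕ := min y (q-y) with hadef
        have ha0 : (0:ℝ) < ((a:ℕ):ℝ) := by
          have : 0 < a := lt_min hy0 (by omega)
          exact_mod_cast this
        refine le_trans hd ?_
        have hfrac : (1:ℝ)/((a:ℕ):ℝ)^2 ≤ 1/((y:ℝ))^2 + 1/(((q-y:ℕ)):ℝ)^2 := by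
          rcases min_choice y (q-y) with hmc | hmc
          · rw [hadef, hmc]
            exact le_add_of_nonneg_right (by positivity)
          · rw [hadef, hmc]
            exact le_add_of_nonneg_left (by positivity)
        calc B*(q:ℝ)^2/(N*((a:ℕ):ℝ)^2) = B*(q:ℝ)^2/N * (1/((a:ℕ):ℝ)^2) := by
              field_simp
          _ ≤ B*(q:ℝ)^2/N * ((1:ℝ)/((y:ℝ))^2 + 1/(((q-y:ℕ)):ℝ)^2) :=
              mul_le_mul_of_nonneg_left hfrac (by positivity)
      have hsubc : fc ⊆ Finset.Ico (t+1) q := by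
        intro y hy
        have := hmem y hy
        rw [Finset.mem_Ico]
        omega
      have hsum1 : ∑ y ∈ fc, (1:ℝ)/((y:ℝ))^2 ≤ 1/(t:ℝ) := by
        refine le_trans (Finset.sum_le_sum_of_subset_of_nonneg hsubc
          (fun i _ _ => by positivity)) ?_
        exact sum_inv_sq_le t q ht1
      have hinj : ∀ x ∈ fc, ∀ y ∈ fc, q - x = q - y → x = y := by
        intro x hx y hy hxy
        have h1 := hmem x hx
        have h2 := hmem y hy
        omega
      have hsum2 : ∑ y ∈ fc, (1:ℝ)/(((q-y:ℕ)):ℝ)^2 ≤ 1/(t:ℝ) := by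
        rw [← Finset.sum_image (f := fun k : ℕ => (1:ℝ)/((k:ℕ):ℝ)^2) hinj]
        have hsub2 : fc.image (fun y => q - y) ⊆ Finset.Ico (t+1) q := by
          intro k hk
          rw [Finset.mem_image] at hk
          obtain ⟨y, hy, rfl⟩ := hk
          have := hmem y hy
          rw [Finset.mem_Ico]
          omega
        refine le_trans (Finset.sum_le_sum_of_subset_of_nonneg hsub2
          (fun i _ _ => by positivity)) ?_
        exact sum_inv_sq_le t q ht1
      calc ∑ y ∈ fc, ‖(∑ n ∈ s, f n * pvE q (-(n * (y:ℤ))))‖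
          ≤ ∑ y ∈ fc, B*(q:ℝ)^2/N * ((1:ℝ)/((y:ℝ))^2 + 1/(((q-y:ℕ)):ℝ)^2) :=
            Finset.sum_le_sum hterm
        _ = B*(q:ℝ)^2/N * ∑ y ∈ fc, ((1:ℝ)/((y:ℝ))^2 + 1/(((q-y:ℕ)):ℝ)^2) := by
            rw [← Finset.mul_sum]
        _ = B*(q:ℝ)^2/N * ((∑ y ∈ fc, (1:ℝ)/((y:ℝ))^2) + ∑ y ∈ fc, (1:ℝ)/(((q-y:ℕ)):ℝ)^2) := by
            rw [Finset.sum_add_distrib]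
        _ ≤ B*(q:ℝ)^2/N * (1/(t:ℝ) + 1/(t:ℝ)) :=
            mul_le_mul_of_nonneg_left (add_le_add hsum1 hsum2) (by positivity)
        _ ≤ (2*R+7)*A2*q := by
            have h1t : (1:ℝ)/t ≤ 2*N/q := by
              rw [div_le_div_iff₀ htR hqR]
              nlinarith [hqt]
            calc B*(q:ℝ)^2/N * (1/(t:ℝ) + 1/(t:ℝ))
                ≤ B*(q:ℝ)^2/N * (2*N/q + 2*N/q) :=
                  mul_le_mul_of_nonneg_left (add_le_add h1t h1t) (by positivity)
              _ = 4*B*q := by field_simp; ring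
              _ = (2*R+7)*A2*q := by rw [hBdef]; ring

    calc ∑ y ∈ (Finset.range q).filter (fun y => min y (q-y) ≤ t),
            ‖(∑ n ∈ s, f n * pvE q (-(n * (y:ℤ))))‖
          + ∑ y ∈ (Finset.range q).filter (fun y => ¬ (min y (q-y) ≤ t)),
            ‖(∑ n ∈ s, f n * pvE q (-(n * (y:ℤ))))‖
        ≤ 3*(2*R+3)*A0*q + (2*R+7)*A2*q := add_le_add hpart1 hpart2
      _ = (3*(2*R+3)*A0 + (2*R+7)*A2) * q := by ring

  rw [norm_mul, norm_inv, Complex.norm_natCast]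
  have hstep2 : ∑ y ∈ Finset.range q,
      ‖((∑ x ∈ Finset.range q, K (x:ZMod q) * pvE q ((x:ℤ) * (y:ℤ)))
        * ∑ n ∈ s, f n * pvE q (-(n * (y:ℤ))))‖
      ≤ Real.sqrt q * S * ((3*(2*R+3)*A0 + (2*R+7)*A2) * q) := by
    calc ∑ y ∈ Finset.range q,
        ‖((∑ x ∈ Finset.range q, K (x:ZMod q) * pvE q ((x:ℤ) * (y:ℤ)))
          * ∑ n ∈ s, f n * pvE q (-(n * (y:ℤ))))‖
        ≤ ∑ y ∈ Finset.range q,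
            Real.sqrt q * S * ‖(∑ n ∈ s, f n * pvE q (-(n * (y:ℤ))))‖ := by
          refine Finset.sum_le_sum fun y hy => ?_
          rw [norm_mul]
          exact mul_le_mul_of_nonneg_right (hGS y hy) (norm_nonneg _)
      _ = Real.sqrt q * S * ∑ y ∈ Finset.range q,
            ‖(∑ n ∈ s, f n * pvE q (-(n * (y:ℤ))))‖ := by
          rw [← Finset.mul_sum]
      _ ≤ Real.sqrt q * S * ((3*(2*R+3)*A0 + (2*R+7)*A2) * q) :=
          mul_le_mul_of_nonneg_left hWsum (mul_nonneg (Real.sqrt_nonneg _) hSnn)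
  refine le_trans (mul_le_mul_of_nonneg_left
    (le_trans (norm_sum_le _ _) hstep2) (inv_nonneg.mpr hqR.le)) ?_
  apply le_of_eq
  field_simp
end

section
/- (Heath-Brown's identity) For every integer J ≥ 1, every real number Z ≥ 1, and every integer n with 1 ≤ n ≤ Z^J, one has Λ(n) = ∑_{j=1}^{J} (−1)^{j−1} binom(J,j) ∑_{m₁,…,m_j ≤ Z} μ(m₁)⋯μ(m_j) ∑_{n₁,…,n_j ≥ 1, m₁⋯m_j n₁⋯n_j = n} log n₁. -/
open Finset ArithmeticFunction

noncomputable section HB7aux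

/-- zeta as a real arithmetic function -/
abbrev HBzr : ArithmeticFunction ℝ := ((zeta : ArithmeticFunction ℕ) : ArithmeticFunction ℝ)

/-- truncated Möbius function -/
def HBfz (K : ℕ) : ArithmeticFunction ℝ :=
  ⟨fun m => if m ≤ K then ((moebius m : ℤ) : ℝ) else 0, by simp⟩

lemma HBfz_apply (K m : ℕ) : HBfz K m = if m ≤ K then ((moebius m : ℤ) : ℝ) else 0 := rfl

namespace HB

lemma sub_apply (f g : ArithmeticFunction ℝ) (m : ℕ) : (f - g) m = f m - g m := by
  rw [sub_eq_add_neg, ArithmeticFunction.add_apply, sub_eq_add_neg]; rfl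

lemma sum_apply' {ι : Type*} (s : Finset ι) (f : ι → ArithmeticFunction ℝ) (m : ℕ) :
    (∑ i ∈ s, f i) m = ∑ i ∈ s, f i m := by
  classical
  induction s using Finset.induction with
  | empty => simp
  | insert _ _ h ih => rw [Finset.sum_insert h, Finset.sum_insert h, ArithmeticFunction.add_apply, ih]

lemma natCast_mul_apply (c : ℕ) (g : ArithmeticFunction ℝ) (m : ℕ) :
    ((c : ArithmeticFunction ℝ) * g) m = (c : ℝ) * g m := by
  induction c with
  | zero => simp
  | succ c ih =>
      have : ((c+1 : ℕ) : ArithmeticFunction ℝ) = (c : ArithmeticFunction ℝ) + 1 := by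
        push_cast; ring
      rw [this, add_mul, one_mul, ArithmeticFunction.add_apply, ih]
      push_cast; ring

lemma neg_one_pow_mul_apply (j : ℕ) (g : ArithmeticFunction ℝ) (m : ℕ) :
    (((-1 : ArithmeticFunction ℝ)) ^ j * g) m = (-1 : ℝ) ^ j * g m := by
  induction j generalizing g with
  | zero => simp
  | succ j ih =>
      have h1 : ((-1 : ArithmeticFunction ℝ)) ^ (j+1) * g
          = ((-1 : ArithmeticFunction ℝ)) ^ j * (-g) := by
        ring
      rw [h1, ih (-g)]
      show (-1:ℝ)^j * (-(g m)) = _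
      ring

lemma sum_piFinset_cons {k : ℕ} (s : Finset ℕ) (F : (Fin (k+1) → ℕ) → ℝ) :
    ∑ t ∈ Fintype.piFinset (fun _ : Fin (k+1) => s), F t
      = ∑ a ∈ s, ∑ t ∈ Fintype.piFinset (fun _ : Fin k => s), F (Fin.cons a t) := by
  rw [← Finset.sum_product']
  refine Finset.sum_nbij' (fun t => (t 0, Fin.tail t)) (fun p => Fin.cons p.1 p.2)
    ?_ ?_ ?_ ?_ ?_
  · intro t ht
    simp only [Fintype.mem_piFinset] at ht
    simp [Finset.mem_product, Fintype.mem_piFinset, Fin.tail, ht]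
  · intro p hp
    simp only [Finset.mem_product, Fintype.mem_piFinset] at hp
    simp only [Fintype.mem_piFinset]
    intro i
    refine Fin.cases ?_ ?_ i
    · simpa using hp.1
    · intro i; simpa using hp.2 i
  · intro t ht; exact Fin.cons_self_tail t
  · intro p hp; simp
  · intro t ht; rw [Fin.cons_self_tail]

lemma filter_dvd_eq_divisors' {n d : ℕ} (hn : n ≠ 0) (hd : d ∣ n) :
    (Finset.Icc 1 n).filter (fun a => a ∣ d) = d.divisors := by
  have hd0 : d ≠ 0 := by
    rintro rfl
    exact hn (Nat.eq_zero_of_zero_dvd hd)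
  ext a
  simp only [Finset.mem_filter, Finset.mem_Icc, Nat.mem_divisors]
  constructor
  · rintro ⟨-, h⟩; exact ⟨h, hd0⟩
  · rintro ⟨h, -⟩
    refine ⟨⟨Nat.one_le_iff_ne_zero.mpr ?_, le_trans (Nat.le_of_dvd (Nat.pos_of_ne_zero hd0) h)
      (Nat.le_of_dvd (Nat.pos_of_ne_zero hn) hd)⟩, h⟩
    rintro rfl
    exact hd0 (Nat.eq_zero_of_zero_dvd h)

lemma Zcount (n : ℕ) (hn : n ≠ 0) (j : ℕ) : ∀ d : ℕ, d ∣ n →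
    (∑ t ∈ (Fintype.piFinset fun _ : Fin j => Finset.Icc 1 n).filter
        (fun t => ∏ i, t i = d), (1:ℝ)) = (HBzr ^ j) d := by
  induction j with
  | zero =>
      intro d hd
      simp only [pow_zero, one_apply]
      rw [Finset.sum_filter]
      simp only [Fin.prod_univ_zero]
      rcases eq_or_ne d 1 with rfl | hd1
      · simp
      · simp [hd1, Ne.symm hd1]
  | succ j ih =>
      intro d hd
      rw [Finset.sum_filter, HB.sum_piFinset_cons]
      have hstep : ∀ a ∈ Finset.Icc 1 n,
          (∑ t ∈ Fintype.piFinset (fun _ : Fin j => Finset.Icc 1 n),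
            if (∏ i, Fin.cons a t i) = d then (1:ℝ) else 0)
          = if a ∣ d then (HBzr ^ j) (d / a) else 0 := by
        intro a ha
        have ha1 : 1 ≤ a := (Finset.mem_Icc.mp ha).1
        simp only [Fin.prod_cons]
        by_cases had : a ∣ d
        · rw [if_pos had]
          obtain ⟨e, rfl⟩ := had
          have hc : ∀ t : Fin j → ℕ, (a * ∏ i, t i = a * e) ↔ (∏ i, t i = e) := by
            intro t
            constructor
            · intro h; exact Nat.eq_of_mul_eq_mul_left (by omega) h
            · intro h; rw [h]
          rw [Nat.mul_div_cancel_left e (by omega)]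
          rw [← ih e (dvd_trans (Dvd.intro_left a rfl) hd), Finset.sum_filter]
          exact Finset.sum_congr rfl fun t _ => if_congr (hc t) rfl rfl
        · rw [if_neg had]
          apply Finset.sum_eq_zero
          intro t _
          exact if_neg fun h => had ⟨∏ i, t i, h.symm⟩
      rw [Finset.sum_congr rfl hstep, ← Finset.sum_filter, HB.filter_dvd_eq_divisors' hn hd,
        pow_succ']
      rw [coe_zeta_mul_apply, ← Nat.sum_div_divisors d (fun i => (HBzr ^ j) i)]

lemma logsum (n : ℕ) (hn : n ≠ 0) (j : ℕ) (e : ℕ) (he : e ∣ n) :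
    (∑ t ∈ (Fintype.piFinset fun _ : Fin (j+1) => Finset.Icc 1 n).filter
        (fun t => ∏ i, t i = e), Real.log (t 0))
      = (ArithmeticFunction.log * HBzr ^ j) e := by
  rw [Finset.sum_filter, HB.sum_piFinset_cons]
  have hstep : ∀ a ∈ Finset.Icc 1 n,
      (∑ t ∈ Fintype.piFinset (fun _ : Fin j => Finset.Icc 1 n),
        if (∏ i, Fin.cons a t i) = e
          then Real.log ((Fin.cons a t : Fin (j+1) → ℕ) 0) else 0)
      = if a ∣ e then Real.log a * (HBzr ^ j) (e / a) else 0 := by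
    intro a ha
    have ha1 : 1 ≤ a := (Finset.mem_Icc.mp ha).1
    simp only [Fin.prod_cons, Fin.cons_zero]
    by_cases hae : a ∣ e
    · rw [if_pos hae, ← HB.Zcount n hn j (e / a) (dvd_trans (Nat.div_dvd_of_dvd hae) he),
        Finset.sum_filter, Finset.mul_sum]
      apply Finset.sum_congr rfl
      intro t _
      obtain ⟨c, rfl⟩ := hae
      have hc : (a * ∏ i, t i = a * c) ↔ (∏ i, t i = c) :=
        ⟨fun h => Nat.eq_of_mul_eq_mul_left (by omega) h, fun h => by rw [h]⟩
      rw [Nat.mul_div_cancel_left c (by omega)]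
      by_cases h : ∏ i, t i = c
      · rw [if_pos (hc.mpr h), if_pos h, mul_one]
      · rw [if_neg (fun hh => h (hc.mp hh)), if_neg h, mul_zero]
    · rw [if_neg hae]
      apply Finset.sum_eq_zero
      intro t _
      exact if_neg fun h => hae ⟨∏ i, t i, h.symm⟩
  rw [Finset.sum_congr rfl hstep, ← Finset.sum_filter, HB.filter_dvd_eq_divisors' hn he,
    mul_apply, Nat.sum_divisorsAntidiagonal (fun x y => ArithmeticFunction.log x * (HBzr ^ j) y)]
  apply Finset.sum_congr rfl
  intro a _
  rw [log_apply]

lemma convB (K : ℕ) (h : ArithmeticFunction ℝ) (k : ℕ) : ∀ n : ℕ, n ≠ 0 →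
    ((HBfz K) ^ k * h) n
      = ∑ m ∈ Fintype.piFinset (fun _ : Fin k => Finset.Icc 1 K),
          (∏ i, HBfz K (m i)) *
            (if (∏ i, m i) ∣ n then h (n / ∏ i, m i) else 0) := by
  induction k with
  | zero =>
      intro n hn
      rw [pow_zero, one_mul]
      rw [Fintype.piFinset_of_isEmpty]
      simp
  | succ k ih =>
      intro n hn
      rw [pow_succ', mul_assoc, mul_apply,
        Nat.sum_divisorsAntidiagonal (fun x y => HBfz K x * ((HBfz K) ^ k * h) y)]
      have step1 : ∑ d ∈ n.divisors, HBfz K d * ((HBfz K) ^ k * h) (n / d)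
          = ∑ d ∈ Finset.Icc 1 K,
              if d ∣ n then HBfz K d * ((HBfz K) ^ k * h) (n / d) else 0 := by
        rw [← Finset.sum_filter]
        refine (Finset.sum_subset ?_ ?_).symm
        · intro d hdm
          simp only [Finset.mem_filter, Finset.mem_Icc] at hdm
          exact Nat.mem_divisors.mpr ⟨hdm.2, hn⟩
        · intro d hd hnd
          have hdvd : d ∣ n := (Nat.mem_divisors.mp hd).1
          have h1 : 1 ≤ d := Nat.one_le_iff_ne_zero.mpr
            (fun h0 => hn (Nat.eq_zero_of_zero_dvd (h0 ▸ hdvd)))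
          have : ¬ d ≤ K := by
            intro hle
            exact hnd (Finset.mem_filter.mpr ⟨Finset.mem_Icc.mpr ⟨h1, hle⟩, hdvd⟩)
          rw [HBfz_apply, if_neg this, zero_mul]
      rw [step1, HB.sum_piFinset_cons]
      apply Finset.sum_congr rfl
      intro d hd
      by_cases hdn : d ∣ n
      · have hnd0 : n / d ≠ 0 := by
          have := Nat.le_of_dvd (Nat.pos_of_ne_zero hn) hdn
          have hd1 : 0 < d := by
            rcases Nat.eq_zero_or_pos d with rfl | h
            · exact absurd (Nat.eq_zero_of_zero_dvd hdn) hn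
            · exact h
          exact Nat.ne_of_gt (Nat.div_pos this hd1)
        rw [if_pos hdn, ih (n / d) hnd0, Finset.mul_sum]
        apply Finset.sum_congr rfl
        intro t _
        rw [Fin.prod_cons]
        have hfz : ∏ i : Fin (k+1), HBfz K ((Fin.cons d t : Fin (k+1) → ℕ) i)
            = HBfz K d * ∏ i, HBfz K (t i) := by
          rw [Fin.prod_univ_succ]
          simp
        rw [hfz]
        have hcond : (∏ i, t i) ∣ n / d ↔ d * ∏ i, t i ∣ n := Nat.dvd_div_iff_mul_dvd hdn
        have hval : n / d / (∏ i, t i) = n / (d * ∏ i, t i) := Nat.div_div_eq_div_mul n d _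
        by_cases hq : (∏ i, t i) ∣ n / d
        · rw [if_pos hq, if_pos (hcond.mp hq), hval]; ring
        · rw [if_neg hq, if_neg (fun hh => hq (hcond.mpr hh)), mul_zero, mul_zero, mul_zero]
      · rw [if_neg hdn]
        symm
        apply Finset.sum_eq_zero
        intro t _
        rw [Fin.prod_cons]
        have : ¬ (d * ∏ i, t i ∣ n) := fun hc => hdn (dvd_of_mul_right_dvd hc)
        rw [if_neg this, mul_zero]

lemma Fzero (Z : ℝ) (hZ : 1 ≤ Z) (m : ℕ) (hm : (m : ℝ) ≤ Z) :
    ((1 : ArithmeticFunction ℝ) - HBfz (Nat.floor Z) * HBzr) m = 0 := by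
  rcases Nat.eq_zero_or_pos m with rfl | hm1
  · exact ArithmeticFunction.map_zero
  · rw [HB.sub_apply, coe_mul_zeta_apply]
    have hdiv : ∀ d ∈ m.divisors, HBfz (Nat.floor Z) d = ((moebius d : ℤ) : ℝ) := by
      intro d hdm
      have hd : d ∣ m := (Nat.mem_divisors.mp hdm).1
      have : (d : ℝ) ≤ Z := le_trans (Nat.cast_le.mpr (Nat.le_of_dvd hm1 hd)) hm
      rw [HBfz_apply, if_pos (Nat.le_floor this)]
    rw [Finset.sum_congr rfl hdiv]
    have : ∑ d ∈ m.divisors, ((moebius d : ℤ) : ℝ)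
        = ((moebius : ArithmeticFunction ℤ) * HBzr : ArithmeticFunction ℝ) m := by
      rw [coe_mul_zeta_apply]
      apply Finset.sum_congr rfl
      intro d _
      rw [intCoe_apply]
    rw [this, coe_moebius_mul_coe_zeta]
    ring

lemma Fpow (Z : ℝ) (hZ : 1 ≤ Z) : ∀ J : ℕ, 1 ≤ J → ∀ m : ℕ, (m : ℝ) ≤ Z ^ J →
    (((1 : ArithmeticFunction ℝ) - HBfz (Nat.floor Z) * HBzr) ^ J) m = 0 := by
  intro J hJ1
  induction J, hJ1 using Nat.le_induction with
  | base =>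
      intro m hm
      rw [pow_one]
      refine HB.Fzero Z hZ m ?_
      rwa [pow_one] at hm
  | succ J hJ ih =>
      intro m hm
      rw [pow_succ']
      rw [mul_apply]
      apply Finset.sum_eq_zero
      intro p hp
      obtain ⟨hpm, hm0⟩ := Nat.mem_divisorsAntidiagonal.mp hp
      by_cases hp1 : (p.1 : ℝ) ≤ Z
      · rw [HB.Fzero Z hZ p.1 hp1, zero_mul]
      · have hZ0 : (0:ℝ) < Z := lt_of_lt_of_le one_pos hZ
        push_neg at hp1
        have hp2 : (p.2 : ℝ) ≤ Z ^ J := by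
          have h2pos : 0 < p.2 := Nat.pos_of_ne_zero (by
            intro h0; rw [h0, mul_zero] at hpm; exact hm0 hpm.symm)
          have hmul : (p.1 : ℝ) * p.2 = (m : ℝ) := by
            rw [← Nat.cast_mul, hpm]
          by_contra hgt
          push_neg at hgt
          have hlt : Z ^ J * Z < (p.2:ℝ) * (p.1:ℝ) :=
            mul_lt_mul'' hgt hp1 (le_of_lt (pow_pos hZ0 J)) (le_of_lt hZ0)
          rw [pow_succ] at hm
          nlinarith [hmul, hm, hlt]
        rw [ih p.2 hp2, mul_zero]

end HB
end HB7aux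

/-- Heath-Brown's identity: for every `J ≥ 1`, `Z ≥ 1` and `1 ≤ n ≤ Z^J`,
`Λ(n) = ∑_{j=1}^{J} (−1)^{j−1} (J choose j) ∑_{m₁,…,m_j ≤ Z} μ(m₁)⋯μ(m_j)
∑_{m₁⋯m_j n₁⋯n_j = n} log n₁` (here the sum over `j` is reindexed by `j = j' + 1`
with `j' ∈ {0, …, J-1}`, and the `nᵢ` range over positive integers, necessarily
at most `n`). -/
theorem stmt_7 (J : ℕ) (hJ : 1 ≤ J) (Z : ℝ) (hZ : 1 ≤ Z) (n : ℕ) (hn : 1 ≤ n)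
    (hnZ : (n : ℝ) ≤ Z ^ J) :
    (ArithmeticFunction.vonMangoldt n : ℝ) =
      ∑ j ∈ Finset.range J,
        (-1 : ℝ) ^ j * (J.choose (j + 1)) *
          ∑ m ∈ Fintype.piFinset (fun _ : Fin (j + 1) => Finset.Icc 1 (Nat.floor Z)),
            (∏ i, ((ArithmeticFunction.moebius (m i) : ℤ) : ℝ)) *
              ∑ t ∈ (Fintype.piFinset (fun _ : Fin (j + 1) => Finset.Icc 1 n)).filter
                  (fun t => (∏ i, m i) * ∏ i, t i = n),
                Real.log (t 0) := by
  classical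
  set K := Nat.floor Z with hK
  set x : ArithmeticFunction ℝ := HBfz K * HBzr with hx
  set H : ArithmeticFunction ℝ :=
    ArithmeticFunction.log * ((moebius : ArithmeticFunction ℤ) : ArithmeticFunction ℝ) with hH
  have hn0 : n ≠ 0 := Nat.one_le_iff_ne_zero.mp hn
  have hΛ : (ArithmeticFunction.vonMangoldt n : ℝ) = H n := by
    rw [hH, log_mul_moebius_eq_vonMangoldt]
  have hzero : (((1 - x) ^ J) * H) n = 0 := by
    rw [mul_apply]
    apply Finset.sum_eq_zero
    intro p hp
    obtain ⟨hpm, hm0⟩ := Nat.mem_divisorsAntidiagonal.mp hp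
    have hp1 : (p.1 : ℝ) ≤ Z ^ J := by
      refine le_trans ?_ hnZ
      exact_mod_cast Nat.le_of_dvd (Nat.pos_of_ne_zero hn0) ⟨p.2, hpm.symm⟩
    rw [HB.Fpow Z hZ J hJ p.1 hp1, zero_mul]
  have key : (ArithmeticFunction.vonMangoldt n : ℝ) = ((1 - (1 - x) ^ J) * H) n := by
    have h2 : ((1 - (1 - x) ^ J) * H) n + (((1 - x) ^ J) * H) n
        = (ArithmeticFunction.vonMangoldt n : ℝ) := by
      rw [← ArithmeticFunction.add_apply, ← add_mul, sub_add_cancel, one_mul, ← hΛ]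
    linarith [h2, hzero]
  have hbin : (1 : ArithmeticFunction ℝ) - (1 - x) ^ J
      = ∑ j ∈ Finset.range J,
          x ^ (j+1) * (-1 : ArithmeticFunction ℝ) ^ j
            * ((J.choose (j+1) : ℕ) : ArithmeticFunction ℝ) := by
    have e1 : (1 : ArithmeticFunction ℝ) - x = -x + 1 := by ring
    have h1 : ((1 : ArithmeticFunction ℝ) - x) ^ J
        = ∑ m ∈ Finset.range (J+1),
            (-x) ^ m * (1 : ArithmeticFunction ℝ) ^ (J - m)
              * ((J.choose m : ℕ) : ArithmeticFunction ℝ) := by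
      rw [e1, add_pow]
    rw [h1, Finset.sum_range_succ']
    have h0 : (-x) ^ 0 * (1 : ArithmeticFunction ℝ) ^ (J - 0)
        * ((J.choose 0 : ℕ) : ArithmeticFunction ℝ) = 1 := by
      simp
    rw [h0]
    have h2 : ∀ i ∈ Finset.range J,
        -((-x) ^ (i+1) * (1 : ArithmeticFunction ℝ) ^ (J - (i+1))
            * ((J.choose (i+1) : ℕ) : ArithmeticFunction ℝ))
        = x ^ (i+1) * (-1 : ArithmeticFunction ℝ) ^ i
            * ((J.choose (i+1) : ℕ) : ArithmeticFunction ℝ) := by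
      intro i _
      rw [one_pow, mul_one]
      have e2 : (-x) ^ (i+1) = (-1 : ArithmeticFunction ℝ) ^ (i+1) * x ^ (i+1) := by
        rw [← neg_one_mul x, mul_pow]
      rw [e2, pow_succ]
      ring
    rw [← Finset.sum_congr rfl h2, Finset.sum_neg_distrib]
    ring
  rw [key, hbin, Finset.sum_mul, HB.sum_apply']
  apply Finset.sum_congr rfl
  intro j hj
  have hrearr : x ^ (j+1) * (-1 : ArithmeticFunction ℝ) ^ j
        * ((J.choose (j+1) : ℕ) : ArithmeticFunction ℝ) * H
      = (-1 : ArithmeticFunction ℝ) ^ j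
          * (((J.choose (j+1) : ℕ) : ArithmeticFunction ℝ) * (x ^ (j+1) * H)) := by
    ring
  rw [hrearr, HB.neg_one_pow_mul_apply, HB.natCast_mul_apply]
  have hxj : x ^ (j+1) * H = (HBfz K) ^ (j+1) * (ArithmeticFunction.log * HBzr ^ j) := by
    have h2 : x ^ (j+1) * H
        = (HBfz K) ^ (j+1) * (ArithmeticFunction.log * (HBzr ^ j
            * (HBzr * ((moebius : ArithmeticFunction ℤ) : ArithmeticFunction ℝ)))) := by
      rw [hx, hH, mul_pow]
      ring
    rw [h2, coe_zeta_mul_coe_moebius, mul_one]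
  rw [hxj, HB.convB K (ArithmeticFunction.log * HBzr ^ j) (j+1) n hn0]
  rw [← mul_assoc]
  congr 1
  apply Finset.sum_congr rfl
  intro m hm
  have hmem : ∀ i, m i ∈ Finset.Icc 1 K := Fintype.mem_piFinset.mp hm
  have hprodfz : ∏ i, HBfz K (m i) = ∏ i, ((moebius (m i) : ℤ) : ℝ) := by
    apply Finset.prod_congr rfl
    intro i _
    rw [HBfz_apply, if_pos (Finset.mem_Icc.mp (hmem i)).2]
  rw [hprodfz]
  congr 1
  have hP1 : 0 < ∏ i, m i := by
    apply Finset.prod_pos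
    intro i _
    exact lt_of_lt_of_le one_pos (Finset.mem_Icc.mp (hmem i)).1
  by_cases hdv : (∏ i, m i) ∣ n
  · rw [if_pos hdv, ← HB.logsum n hn0 j (n / ∏ i, m i) (Nat.div_dvd_of_dvd hdv)]
    congr 1
    apply Finset.filter_congr
    intro t _
    have hne : (∏ i, m i) * (n / ∏ i, m i) = n := Nat.mul_div_cancel' hdv
    constructor
    · intro hc
      rw [hc]
      exact hne
    · intro hc
      exact Nat.eq_of_mul_eq_mul_left hP1 (by rw [hne]; exact hc)
  · rw [if_neg hdv]
    symm
    apply Finset.sum_eq_zero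
    intro t ht
    exact absurd ⟨∏ i, t i, ((Finset.mem_filter.mp ht).2).symm⟩ hdv
end
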